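/- arXiv:0909.2384 — 5 statements merged into one kernel-verified Lean document; each statement's English description precedes it below -/
import Mathlib

section
/- Let R be a commutative ring, let M be a Gorenstein projective R-module, let 0 → M →α P →β M → 0 be a short exact sequence of R-modules with P projective, let Q be a projective R-module, and let u : M → Q be an R-module homomorphism. Then there exists an R-module homomorphism γ : P → Q ⊕ Q such that γ ∘ α = ι ∘ u and j ∘ γ = u ∘ β, where ι : Q → Q ⊕ Q is the canonical injection q ↦ (q, 0) and j : Q ⊕ Q → Q is the canonical projection (q, q') ↦ q'. -/
universe u v

section Defs

variable (R : Type u) [CommRing R]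

/-- An `R`-module `M` is *Gorenstein projective* if there is a doubly infinite exact
sequence of projective modules `⋯ → P i → P (i+1) → ⋯` with `M` isomorphic to the image
of `P 0 → P 1`, which remains exact after applying `Hom_R(−, Q)` for every projective `Q`. -/
def IsGorensteinProjective (M : ModuleCat.{v} R) : Prop :=
  ∃ (P : ℤ → ModuleCat.{v} R) (d : ∀ i : ℤ, P i →ₗ[R] P (i + 1)),
    (∀ i : ℤ, Module.Projective R (P i)) ∧
    (∀ i : ℤ, LinearMap.range (d i) = LinearMap.ker (d (i + 1))) ∧
    Nonempty (M ≃ₗ[R] LinearMap.range (d 0)) ∧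
    (∀ (Q : ModuleCat.{v} R), Module.Projective R Q →
      ∀ (i : ℤ) (g : P (i + 1) →ₗ[R] Q), g ∘ₗ d i = 0 →
        ∃ h : P (i + 1 + 1) →ₗ[R] Q, h ∘ₗ d (i + 1) = g)

/-- An `R`-module `M` is *strongly Gorenstein projective* if there is an exact sequence
`⋯ → P → P → P → ⋯` with one projective module `P` and one map `f`, `M ≅ Im f`,
which remains exact after applying `Hom_R(−, Q)` for every projective `Q`. -/
def IsStronglyGorensteinProjective (M : ModuleCat.{v} R) : Prop :=
  ∃ (P : ModuleCat.{v} R) (f : P →ₗ[R] P),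
    Module.Projective R P ∧
    LinearMap.range f = LinearMap.ker f ∧
    Nonempty (M ≃ₗ[R] LinearMap.range f) ∧
    (∀ (Q : ModuleCat.{v} R), Module.Projective R Q →
      ∀ g : P →ₗ[R] Q, g ∘ₗ f = 0 → ∃ h : P →ₗ[R] Q, h ∘ₗ f = g)

/-- Gorenstein injective modules, dual to Gorenstein projective ones. -/
def IsGorensteinInjective (M : ModuleCat.{v} R) : Prop :=
  ∃ (E : ℤ → ModuleCat.{v} R) (d : ∀ i : ℤ, E i →ₗ[R] E (i + 1)),
    (∀ i : ℤ, Module.Injective R (E i)) ∧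
    (∀ i : ℤ, LinearMap.range (d i) = LinearMap.ker (d (i + 1))) ∧
    Nonempty (M ≃ₗ[R] LinearMap.range (d 0)) ∧
    (∀ (I : ModuleCat.{v} R), Module.Injective R I →
      ∀ (i : ℤ) (g : I →ₗ[R] E (i + 1)), d (i + 1) ∘ₗ g = 0 →
        ∃ h : I →ₗ[R] E i, d i ∘ₗ h = g)

/-- Strongly Gorenstein injective modules. -/
def IsStronglyGorensteinInjective (M : ModuleCat.{v} R) : Prop :=
  ∃ (E : ModuleCat.{v} R) (f : E →ₗ[R] E),
    Module.Injective R E ∧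
    LinearMap.range f = LinearMap.ker f ∧
    Nonempty (M ≃ₗ[R] LinearMap.range f) ∧
    (∀ (I : ModuleCat.{v} R), Module.Injective R I →
      ∀ g : I →ₗ[R] E, f ∘ₗ g = 0 → ∃ h : I →ₗ[R] E, f ∘ₗ h = g)

/-- An `R`-module `M` is *Gorenstein flat* if there is a doubly infinite exact sequence of
flat modules with `M` isomorphic to the image of the middle map, which remains exact after
applying `− ⊗_R I` for every injective `R`-module `I`. -/
def IsGorensteinFlat (M : ModuleCat.{v} R) : Prop :=
  ∃ (F : ℤ → ModuleCat.{v} R) (d : ∀ i : ℤ, F i →ₗ[R] F (i + 1)),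
    (∀ i : ℤ, Module.Flat R (F i)) ∧
    (∀ i : ℤ, LinearMap.range (d i) = LinearMap.ker (d (i + 1))) ∧
    Nonempty (M ≃ₗ[R] LinearMap.range (d 0)) ∧
    (∀ (I : ModuleCat.{v} R), Module.Injective R I →
      ∀ i : ℤ, LinearMap.range (LinearMap.rTensor (R := R) I (d i)) =
        LinearMap.ker (LinearMap.rTensor (R := R) I (d (i + 1))))

/-- Strongly Gorenstein flat modules. -/
def IsStronglyGorensteinFlat (M : ModuleCat.{v} R) : Prop :=
  ∃ (F : ModuleCat.{v} R) (f : F →ₗ[R] F),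
    Module.Flat R F ∧
    LinearMap.range f = LinearMap.ker f ∧
    Nonempty (M ≃ₗ[R] LinearMap.range f) ∧
    (∀ (I : ModuleCat.{v} R), Module.Injective R I →
      LinearMap.range (LinearMap.rTensor (R := R) I f) =
        LinearMap.ker (LinearMap.rTensor (R := R) I f))

/-- `GorensteinProjDimLE R n M` means the Gorenstein projective dimension of `M` is `≤ n`:
there is an exact sequence `0 → G_n → ⋯ → G_0 → M → 0` with all `G_i` Gorenstein projective. -/
def GorensteinProjDimLE : ℕ → ModuleCat.{v} R → Prop
  | 0, M => IsGorensteinProjective R M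
  | n + 1, M =>
    ∃ (G K : ModuleCat.{v} R) (f : K →ₗ[R] G) (g : G →ₗ[R] M),
      IsGorensteinProjective R G ∧ Function.Injective f ∧ Function.Surjective g ∧
      LinearMap.range f = LinearMap.ker g ∧ GorensteinProjDimLE n K

/-- `GorensteinFlatDimLE R n M` means the Gorenstein flat dimension of `M` is `≤ n`. -/
def GorensteinFlatDimLE : ℕ → ModuleCat.{v} R → Prop
  | 0, M => IsGorensteinFlat R M
  | n + 1, M =>
    ∃ (G K : ModuleCat.{v} R) (f : K →ₗ[R] G) (g : G →ₗ[R] M),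
      IsGorensteinFlat R G ∧ Function.Injective f ∧ Function.Surjective g ∧
      LinearMap.range f = LinearMap.ker g ∧ GorensteinFlatDimLE n K

/-- `ProjDimLE R n M` means the projective dimension of `M` is `≤ n`. -/
def ProjDimLE : ℕ → ModuleCat.{v} R → Prop
  | 0, M => Module.Projective R M
  | n + 1, M =>
    ∃ (G K : ModuleCat.{v} R) (f : K →ₗ[R] G) (g : G →ₗ[R] M),
      Module.Projective R G ∧ Function.Injective f ∧ Function.Surjective g ∧
      LinearMap.range f = LinearMap.ker g ∧ ProjDimLE n K

/-- `FlatDimLE R n M` means the flat dimension of `M` is `≤ n`. -/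
def FlatDimLE : ℕ → ModuleCat.{v} R → Prop
  | 0, M => Module.Flat R M
  | n + 1, M =>
    ∃ (G K : ModuleCat.{v} R) (f : K →ₗ[R] G) (g : G →ₗ[R] M),
      Module.Flat R G ∧ Function.Injective f ∧ Function.Surjective g ∧
      LinearMap.range f = LinearMap.ker g ∧ FlatDimLE n K

/-- A commutative ring is *coherent* if every finitely generated ideal is finitely presented. -/
def IsCoherentRing : Prop :=
  ∀ I : Ideal R, I.FG → Module.FinitePresentation R I

end Defs
/-- Lemma 1.5: a map from a Gorenstein projective module in a short exact sequence
`0 → M → P → M → 0` with `P` projective lifts against the trivial extension `0 → Q → Q ⊕ Q → Q → 0`. -/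
theorem gorensteinProjective_lift_to_trivial_extension
    (R : Type u) [CommRing R] (M P Q : ModuleCat.{v} R)
    (hM : IsGorensteinProjective R M)
    (hP : Module.Projective R P) (hQ : Module.Projective R Q)
    (α : M →ₗ[R] P) (β : P →ₗ[R] M)
    (hα : Function.Injective α) (hβ : Function.Surjective β)
    (hexact : LinearMap.range α = LinearMap.ker β)
    (u : M →ₗ[R] Q) :
    ∃ γ : P →ₗ[R] (Q × Q),
      γ ∘ₗ α = LinearMap.inl R Q Q ∘ₗ u ∧
      LinearMap.snd R Q Q ∘ₗ γ = u ∘ₗ β := by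
  classical
  obtain ⟨P', d, hproj, hex, ⟨e⟩, hlift⟩ := hM
  haveI := hP
  haveI := hQ
  haveI := hproj 0
  -- the surjection π : P' 0 → M induced by d 0 and the iso e
  let π : P' 0 →ₗ[R] M := (e.symm : LinearMap.range (d 0) →ₗ[R] M) ∘ₗ (d 0).rangeRestrict
  have hπ : Function.Surjective π :=
    e.symm.surjective.comp (d 0).surjective_rangeRestrict
  have hπker : ∀ x : P' 0, π x = 0 ↔ d 0 x = 0 := by
    intro x
    constructor
    · intro hx
      have h0 : e.symm ((d 0).rangeRestrict x) = 0 := hx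
      have h1 : (d 0).rangeRestrict x = 0 := by
        have := congrArg e h0
        simpa using this
      have := congrArg (Submodule.subtype _) h1
      simpa using this
    · intro hx
      have h0 : (d 0).rangeRestrict x = 0 := by
        apply Subtype.ext
        simpa using hx
      show e.symm ((d 0).rangeRestrict x) = 0
      rw [h0, map_zero]
  -- lift π through β using projectivity of P' 0
  obtain ⟨φ, hφ⟩ := Module.projective_lifting_property β π hβ
  have hφ' : ∀ x, β (φ x) = π x := fun x => congrArg (fun f => f x) hφ
  -- identify M with range α
  let αe : M ≃ₗ[R] LinearMap.range α := LinearEquiv.ofInjective α hα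
  have hφmem : ∀ x : LinearMap.ker (d 0), φ x ∈ LinearMap.range α := by
    intro x
    rw [hexact, LinearMap.mem_ker, hφ']
    exact (hπker x).mpr x.2
  let ψ : LinearMap.ker (d 0) →ₗ[R] M :=
    αe.symm.toLinearMap ∘ₗ
      LinearMap.codRestrict (LinearMap.range α)
        (φ ∘ₗ (LinearMap.ker (d 0)).subtype) hφmem
  have key : ∀ y : LinearMap.range α, α ((LinearEquiv.ofInjective α hα).symm y) = ↑y := by
    intro y
    rw [← LinearEquiv.ofInjective_apply α (h := hα), LinearEquiv.apply_symm_apply]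
  have hψ : ∀ x : LinearMap.ker (d 0), α (ψ x) = φ x := by
    intro x
    exact key (LinearMap.codRestrict (LinearMap.range α)
      (φ ∘ₗ (LinearMap.ker (d 0)).subtype) hφmem x)
  let v : LinearMap.ker (d 0) →ₗ[R] Q := u ∘ₗ ψ
  -- exactness of the complete resolution
  have hrange : LinearMap.range (d (-1)) = LinearMap.ker (d 0) := hex (-1)
  let dres : P' (-1 : ℤ) →ₗ[R] LinearMap.ker (d 0) :=
    LinearMap.codRestrict _ (d (-1))
      (fun x => by rw [← hrange]; exact LinearMap.mem_range_self _ x)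
  let g : P' ((-2 : ℤ) + 1) →ₗ[R] Q := v ∘ₗ dres
  have hg : g ∘ₗ d (-2) = 0 := by
    apply LinearMap.ext
    intro y
    have hd : d (-1) (d (-2) y) = 0 := by
      have hex2 : LinearMap.range (d (-2)) = LinearMap.ker (d (-1)) := hex (-2)
      have : d (-2) y ∈ LinearMap.ker (d (-1)) := by
        rw [← hex2]; exact LinearMap.mem_range_self _ y
      exact this
    have hz : dres (d (-2) y) = 0 := Subtype.ext (by simpa [dres] using hd)
    show v (dres (d (-2) y)) = 0
    rw [hz, map_zero]
  obtain ⟨h, hh⟩ := hlift Q hQ (-2) g hg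
  have hh' : ∀ y : P' (-1 : ℤ), h (d (-1) y) = g y :=
    fun y => congrArg (fun f => f y) hh
  have hhK : ∀ (x : P' 0) (hx : x ∈ LinearMap.ker (d 0)), h x = v ⟨x, hx⟩ := by
    intro x hx
    have hx' : x ∈ (LinearMap.range (d (-1)) : Submodule R (P' 0)) := by rw [hrange]; exact hx
    obtain ⟨y, rfl⟩ := hx'
    have : g y = v ⟨d (-1) y, hx⟩ := by
      show v (dres y) = v ⟨d (-1) y, hx⟩
      congr 1
    rw [hh' y, this]
  -- the surjection σ : M × P' 0 → P
  let σ : (M × P' 0) →ₗ[R] P := LinearMap.coprod α φ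
  have hσ : Function.Surjective σ := by
    intro p
    obtain ⟨x, hx⟩ := hπ (β p)
    have hmem : p - φ x ∈ LinearMap.ker β := by
      rw [LinearMap.mem_ker, map_sub, hφ', hx, sub_self]
    rw [← hexact] at hmem
    obtain ⟨m, hm⟩ := hmem
    refine ⟨(m, x), ?_⟩
    show α m + φ x = p
    rw [hm, sub_add_cancel]
  let ξ : (M × P' 0) →ₗ[R] Q := LinearMap.coprod u h
  have hker : ∀ z : M × P' 0, σ z = 0 → ξ z = 0 := by
    rintro ⟨m, x⟩ hz
    have hz' : α m + φ x = 0 := hz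
    have hβφ : β (φ x) = 0 := by
      have h1 : β (α m) = 0 := by
        have : α m ∈ LinearMap.ker β := by
          rw [← hexact]; exact LinearMap.mem_range_self _ m
        exact this
      have := congrArg β hz'
      rw [map_add, h1, zero_add, map_zero] at this
      exact this
    have hπx : π x = 0 := by rw [← hφ']; exact hβφ
    have hxmem : x ∈ LinearMap.ker (d 0) := (hπker x).mp hπx
    have hmψ : m + ψ ⟨x, hxmem⟩ = 0 := by
      apply hα
      rw [map_add, hψ ⟨x, hxmem⟩, map_zero]
      exact hz'
    show u m + h x = 0
    rw [hhK x hxmem]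
    show u m + v ⟨x, hxmem⟩ = 0
    show u m + u (ψ ⟨x, hxmem⟩) = 0
    rw [← map_add, hmψ, map_zero]
  -- split σ using projectivity of P
  obtain ⟨s, hs⟩ := Module.projective_lifting_property σ LinearMap.id hσ
  have hs' : ∀ p : P, σ (s p) = p := fun p => congrArg (fun f => f p) hs
  let γ₁ : P →ₗ[R] Q := ξ ∘ₗ s
  have hγ₁ : ∀ m : M, γ₁ (α m) = u m := by
    intro m
    have h0 : σ (s (α m) - (m, 0)) = 0 := by
      rw [map_sub, hs']
      show α m - (α m + φ 0) = 0
      rw [map_zero, add_zero, sub_self]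
    have h1 : ξ (s (α m) - (m, 0)) = 0 := hker _ h0
    rw [map_sub] at h1
    have h2 : ξ ((m, 0) : M × P' 0) = u m := by
      show u m + h 0 = u m
      rw [map_zero, add_zero]
    show ξ (s (α m)) = u m
    rw [sub_eq_zero] at h1
    rw [h1, h2]
  refine ⟨LinearMap.prod γ₁ (u ∘ₗ β), ?_, ?_⟩
  · apply LinearMap.ext
    intro m
    have hβα : β (α m) = 0 := by
      have : α m ∈ LinearMap.ker β := by
        rw [← hexact]; exact LinearMap.mem_range_self _ m
      exact this
    show (γ₁ (α m), u (β (α m))) = (u m, 0)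
    rw [hγ₁ m, hβα, map_zero]
  · rfl
end

section
/- Let R be a commutative ring. The following are equivalent: (1) every Gorenstein projective R-module is strongly Gorenstein projective; (2) for every R-module M with Gorenstein projective dimension Gpd_R(M) ≤ 1, there exists a short exact sequence 0 → M → Q → M → 0 of R-modules where Q has projective dimension pd_R(Q) ≤ 1. -/
universe u v

section Helpers
variable {R : Type u} [CommRing R] {A B C : Type v} [AddCommGroup A] [AddCommGroup B]
  [AddCommGroup C] [Module R A] [Module R B] [Module R C]

noncomputable def factorSurj (π : A →ₗ[R] B) (hπ : Function.Surjective π) (m : A →ₗ[R] C)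
    (h : LinearMap.ker π ≤ LinearMap.ker m) : B →ₗ[R] C :=
  (Submodule.liftQ (LinearMap.ker π) m h) ∘ₗ
    ((LinearMap.quotKerEquivOfSurjective π hπ).symm : B →ₗ[R] (A ⧸ LinearMap.ker π))

theorem factorSurj_apply (π : A →ₗ[R] B) (hπ : Function.Surjective π) (m : A →ₗ[R] C)
    (h : LinearMap.ker π ≤ LinearMap.ker m) (x : A) : (factorSurj π hπ m h) (π x) = m x := by
  have h1 : (LinearMap.quotKerEquivOfSurjective π hπ) (Submodule.Quotient.mk x) = π x := rfl
  have h2 : (LinearMap.quotKerEquivOfSurjective π hπ).symm (π x) = Submodule.Quotient.mk x := by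
    rw [← h1, LinearEquiv.symm_apply_apply]
  simp [factorSurj, h2]

theorem factorSurj_comp (π : A →ₗ[R] B) (hπ : Function.Surjective π) (m : A →ₗ[R] C)
    (h : LinearMap.ker π ≤ LinearMap.ker m) : (factorSurj π hπ m h) ∘ₗ π = m := by
  ext x; exact factorSurj_apply π hπ m h x

noncomputable def factorInj (ι : A →ₗ[R] B) (hι : Function.Injective ι) (m : C →ₗ[R] B)
    (h : ∀ x, m x ∈ LinearMap.range ι) : C →ₗ[R] A :=
  ((LinearEquiv.ofInjective ι hι).symm : (LinearMap.range ι) →ₗ[R] A) ∘ₗ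
    (LinearMap.codRestrict (LinearMap.range ι) m h)

theorem factorInj_apply (ι : A →ₗ[R] B) (hι : Function.Injective ι) (m : C →ₗ[R] B)
    (h : ∀ x, m x ∈ LinearMap.range ι) (x : C) : ι ((factorInj ι hι m h) x) = m x := by
  simp only [factorInj, LinearMap.comp_apply, LinearMap.codRestrict_apply]
  have : ∀ y : LinearMap.range ι, ι ((LinearEquiv.ofInjective ι hι).symm y) = (y : B) := by
    intro y
    conv_rhs => rw [← (LinearEquiv.ofInjective ι hι).apply_symm_apply y]
    rfl
  exact this ⟨m x, h x⟩

theorem factorInj_spec (ι : A →ₗ[R] B) (hι : Function.Injective ι) (m : C →ₗ[R] B)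
    (h : ∀ x, m x ∈ LinearMap.range ι) : ι ∘ₗ (factorInj ι hι m h) = m := by
  ext x; exact factorInj_apply ι hι m h x

theorem mkQ_eq_of_sub_mem (W : Submodule R A) (x y : A) (h : x - y ∈ W) :
    W.mkQ x = W.mkQ y := by
  rw [← sub_eq_zero, ← map_sub]
  exact (Submodule.Quotient.mk_eq_zero W).2 h

theorem comp_eq_zero_of_range_le_ker (f : A →ₗ[R] B) (g : B →ₗ[R] C)
    (h : LinearMap.range f ≤ LinearMap.ker g) : g ∘ₗ f = 0 := by
  ext x
  exact h (LinearMap.mem_range_self f x)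

end Helpers

section Core
variable {R : Type u} [CommRing R]

/-- Normalized extraction of the relevant finite part of a complete resolution. -/
theorem gp_core (N : ModuleCat.{v} R) (hN : IsGorensteinProjective R N) :
    ∃ (A B C : ModuleCat.{v} R) (dA : A →ₗ[R] B) (dB : B →ₗ[R] C) (p : C →ₗ[R] N),
      Module.Projective R C ∧ Function.Surjective p ∧
      LinearMap.ker p = LinearMap.range dB ∧ dB ∘ₗ dA = 0 ∧
      ∀ (W : ModuleCat.{v} R), Module.Projective R W → ∀ g : B →ₗ[R] W, g ∘ₗ dA = 0 →
        ∃ h : C →ₗ[R] W, h ∘ₗ dB = g := by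
  obtain ⟨P, d, hproj, hex, ⟨e⟩, hhom⟩ := hN
  let pc : ∀ {i j : ℤ}, i = j → (↑(P i) →ₗ[R] ↑(P j)) := fun {i j} h => h ▸ LinearMap.id
  have dnat : ∀ {i j : ℤ} (h : i = j) (x : ↑(P i)),
      d j (pc h x) = pc (by rw [h]) (d i x) := by
    intro i j h x
    cases h
    rfl
  have pcinj : ∀ {i j : ℤ} (h : i = j), Function.Injective (pc h) := by
    intro i j h
    cases h
    exact fun a b hab => hab
  have pcsurj : ∀ {i j : ℤ} (h : i = j), Function.Surjective (pc h) := by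
    intro i j h
    cases h
    exact fun a => ⟨a, rfl⟩
  have E : ((-2 : ℤ)+1+1) = 0 := by decide
  let pbase : ↑(P 0) →ₗ[R] ↑N :=
    (e.symm : (LinearMap.range (d 0)) →ₗ[R] N) ∘ₗ (d 0).rangeRestrict
  have hpbase : Function.Surjective pbase := by
    intro n
    obtain ⟨x, hx⟩ := (d 0).surjective_rangeRestrict (e n)
    refine ⟨x, ?_⟩
    show e.symm ((d 0).rangeRestrict x) = n
    rw [hx]; simp
  have hkerpbase : LinearMap.ker pbase = LinearMap.ker (d 0) := by
    ext x
    simp only [LinearMap.mem_ker]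
    have hz : pbase x = e.symm ((d 0).rangeRestrict x) := rfl
    rw [hz]
    rw [show (e.symm ((d 0).rangeRestrict x) = 0) ↔ ((d 0).rangeRestrict x = 0) from
      e.symm.map_eq_zero_iff]
    rw [Subtype.ext_iff]
    simp
  refine ⟨P (-2), P (-2+1), P (-2+1+1), d (-2), d (-2+1), pbase ∘ₗ pc E, hproj _, ?_, ?_, ?_, ?_⟩
  · exact hpbase.comp (pcsurj E)
  · ext x
    simp only [LinearMap.mem_ker, LinearMap.comp_apply]
    rw [show (pbase (pc E x) = 0) ↔ (pc E x ∈ LinearMap.ker pbase) from Iff.rfl, hkerpbase]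
    rw [LinearMap.mem_ker]
    rw [dnat E x]
    constructor
    · intro hh
      have hpc : pc (show ((-2:ℤ)+1+1)+1 = 0+1 by decide) ((d (-2+1+1)) x)
          = pc (show ((-2:ℤ)+1+1)+1 = 0+1 by decide) 0 := by
        rw [map_zero]
        exact hh
      have h0 : d (-2+1+1) x = 0 := pcinj (show ((-2:ℤ)+1+1)+1 = 0+1 by decide) hpc
      rw [hex (-2+1)]
      exact h0
    · intro hx
      rw [hex (-2+1)] at hx
      rw [show d (-2+1+1) x = 0 from hx, map_zero]
  · exact comp_eq_zero_of_range_le_ker _ _ (le_of_eq (hex (-2)))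
  · exact fun W hW g hg => hhom W hW (-2) g hg

theorem gp_split (N : ModuleCat.{v} R) (hN : IsGorensteinProjective R N)
    (E W : ModuleCat.{v} R) (hW : Module.Projective R W)
    (j : W →ₗ[R] E) (π : E →ₗ[R] N) (hj : Function.Injective j) (hπ : Function.Surjective π)
    (hje : LinearMap.range j = LinearMap.ker π) :
    ∃ s : N →ₗ[R] E, π ∘ₗ s = LinearMap.id := by
  obtain ⟨A, B, C, dA, dB, p, hC, hp, hkerp, hzero, hhom⟩ := gp_core N hN
  haveI := hC
  obtain ⟨γ, hγ⟩ := Module.projective_lifting_property π p hπ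
  have hmem : ∀ x, (γ ∘ₗ dB) x ∈ LinearMap.range j := by
    intro x
    rw [hje]
    have hx : dB x ∈ LinearMap.ker p := by
      rw [hkerp]; exact LinearMap.mem_range_self _ x
    have h2 : π (γ (dB x)) = p (dB x) := by
      have := congrArg (fun f => f (dB x)) hγ
      simpa using this
    simp only [LinearMap.mem_ker, LinearMap.comp_apply]
    rw [h2]
    exact hx
  let g₁ : B →ₗ[R] W := factorInj j hj (γ ∘ₗ dB) hmem
  have hg₁ : ∀ y, j (g₁ y) = γ (dB y) := fun y => factorInj_apply _ _ _ _ y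
  have hcond : g₁ ∘ₗ dA = 0 := by
    apply LinearMap.ext
    intro x
    apply hj
    simp only [LinearMap.comp_apply, LinearMap.zero_apply, map_zero]
    rw [hg₁]
    have : dB (dA x) = 0 := by
      have := congrArg (fun f => f x) hzero
      simpa using this
    rw [this, map_zero]
  obtain ⟨h, hh⟩ := hhom W hW g₁ hcond
  have hh' : ∀ y, h (dB y) = g₁ y := by
    intro y
    have := congrArg (fun f => f y) hh
    simpa using this
  let γ' : C →ₗ[R] E := γ - j ∘ₗ h
  have hπγ' : ∀ x, π (γ' x) = p x := by
    intro x
    have h1 : π (γ x) = p x := by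
      have := congrArg (fun f => f x) hγ; simpa using this
    have h2 : π (j (h x)) = 0 := by
      have : j (h x) ∈ LinearMap.ker π := hje ▸ LinearMap.mem_range_self _ _
      exact this
    simp only [γ', LinearMap.sub_apply, LinearMap.comp_apply, map_sub, h1, h2, sub_zero]
  have hker : LinearMap.ker p ≤ LinearMap.ker γ' := by
    intro x hx
    rw [hkerp] at hx
    obtain ⟨y, rfl⟩ := hx
    simp only [γ', LinearMap.mem_ker, LinearMap.sub_apply, LinearMap.comp_apply]
    rw [hh', hg₁, sub_self]
  refine ⟨factorSurj p hp γ' hker, ?_⟩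
  apply LinearMap.ext
  intro n
  obtain ⟨x, rfl⟩ := hp n
  simp only [LinearMap.comp_apply, LinearMap.id_apply]
  rw [factorSurj_apply]
  exact hπγ' x

end Core

section Ext
variable {R : Type u} [CommRing R]

/-- Maps into projectives extend along injections whose cokernel is Gorenstein projective. -/
theorem gp_extmap (N : ModuleCat.{v} R) (hN : IsGorensteinProjective R N)
    (A X : ModuleCat.{v} R) (ι : A →ₗ[R] X) (π : X →ₗ[R] N)
    (hι : Function.Injective ι) (hπ : Function.Surjective π)
    (hexa : LinearMap.range ι = LinearMap.ker π)
    (Q' : ModuleCat.{v} R) (hQ' : Module.Projective R Q') (g' : A →ₗ[R] Q') :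
    ∃ h : X →ₗ[R] Q', h ∘ₗ ι = g' := by
  classical
  let k : A →ₗ[R] (Q' × X) := LinearMap.prod g' (-ι)
  let Wsub : Submodule R (Q' × X) := LinearMap.range k
  let E := ModuleCat.of R ((Q' × X) ⧸ Wsub)
  let mk : (Q' × X) →ₗ[R] E := Wsub.mkQ
  let jQ : Q' →ₗ[R] E := mk ∘ₗ LinearMap.inl R Q' X
  let jX : X →ₗ[R] E := mk ∘ₗ LinearMap.inr R Q' X
  have hkval : ∀ a : A, k a = (g' a, -ι a) := fun a => rfl
  have hmkeq : ∀ z w : Q' × X, z - w ∈ Wsub → mk z = mk w := by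
    intro z w hzw
    have : Submodule.Quotient.mk z = Submodule.Quotient.mk w := (Submodule.Quotient.eq Wsub).2 hzw
    exact this
  have hmkeq' : ∀ z w : Q' × X, mk z = mk w → z - w ∈ Wsub := by
    intro z w hzw
    have : Submodule.Quotient.mk z = (Submodule.Quotient.mk w : (Q' × X) ⧸ Wsub) := hzw
    exact (Submodule.Quotient.eq Wsub).1 this
  have hjQ : Function.Injective jQ := by
    intro a b hab
    have hmem : ((a : Q'), (0:X)) - (b, 0) ∈ Wsub := hmkeq' _ _ hab
    obtain ⟨c, hc⟩ := hmem
    rw [hkval] at hc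
    have hc2 : -ι c = (0:X) - 0 := congrArg Prod.snd hc
    have hc0 : c = 0 := hι (by simpa using (neg_eq_zero.1 (by simpa using hc2)))
    have hc1 : g' c = a - b := congrArg Prod.fst hc
    rw [hc0, map_zero] at hc1
    exact sub_eq_zero.1 hc1.symm
  have hWker : Wsub ≤ LinearMap.ker (π ∘ₗ LinearMap.snd R Q' X) := by
    rintro z ⟨a, rfl⟩
    rw [hkval]
    simp only [LinearMap.mem_ker, LinearMap.comp_apply, LinearMap.snd_apply, map_neg,
      neg_eq_zero]
    have : ι a ∈ LinearMap.ker π := hexa ▸ LinearMap.mem_range_self _ a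
    exact this
  let πE : E →ₗ[R] N := Submodule.liftQ Wsub (π ∘ₗ LinearMap.snd R Q' X) hWker
  have hπE_mk : ∀ z : Q' × X, πE (mk z) = π z.2 := fun z => rfl
  have hπE : Function.Surjective πE := by
    intro n
    obtain ⟨x, hx⟩ := hπ n
    exact ⟨mk (0, x), by rw [hπE_mk]; exact hx⟩
  have hrange : LinearMap.range jQ = LinearMap.ker πE := by
    apply le_antisymm
    · rintro z ⟨q, rfl⟩
      show πE (mk (q, 0)) = 0
      rw [hπE_mk]
      simp
    · rintro z hz
      obtain ⟨w, rfl⟩ := Submodule.mkQ_surjective Wsub z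
      obtain ⟨q', x⟩ := w
      have hπx : π x = 0 := hz
      have hx : x ∈ LinearMap.range ι := by rw [hexa]; exact hπx
      obtain ⟨a, rfl⟩ := hx
      refine ⟨q' + g' a, ?_⟩
      show mk ((q' + g' a : Q'), (0:X)) = mk (q', ι a)
      apply hmkeq
      refine ⟨a, ?_⟩
      rw [hkval]
      have h1 : (q' + g' a : Q') - q' = g' a := by abel
      have h2 : (0 : X) - ι a = -ι a := zero_sub _
      rw [Prod.mk_sub_mk, h1, h2]
  obtain ⟨s, hs⟩ := gp_split N hN E Q' hQ' jQ πE hjQ hπE hrange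
  have hsap : ∀ n, πE (s n) = n := by
    intro n
    have := congrArg (fun f => f n) hs
    simpa using this
  let ρ : E →ₗ[R] E := LinearMap.id - s ∘ₗ πE
  have hρmem : ∀ e, ρ e ∈ LinearMap.range jQ := by
    intro e
    rw [hrange]
    simp only [ρ, LinearMap.mem_ker, LinearMap.sub_apply, LinearMap.id_apply,
      LinearMap.comp_apply, map_sub, hsap]
    exact sub_self _
  let r : E →ₗ[R] Q' := factorInj jQ hjQ ρ hρmem
  have hr : ∀ y : Q', r (jQ y) = y := by
    intro y
    apply hjQ
    rw [factorInj_apply]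
    have hy0 : πE (jQ y) = 0 := by
      have : jQ y ∈ LinearMap.ker πE := hrange ▸ LinearMap.mem_range_self _ y
      exact this
    simp only [ρ, LinearMap.sub_apply, LinearMap.id_apply, LinearMap.comp_apply, hy0,
      map_zero, sub_zero]
  refine ⟨r ∘ₗ jX, ?_⟩
  apply LinearMap.ext
  intro a
  simp only [LinearMap.comp_apply]
  have hclass : jX (ι a) = jQ (g' a) := by
    show mk ((0:Q'), ι a) = mk (g' a, (0:X))
    apply hmkeq
    refine ⟨-a, ?_⟩
    rw [hkval]
    have h1 : (0 : Q') - g' a = g' (-a) := by rw [map_neg]; exact zero_sub _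
    have h2 : ι a - 0 = -ι (-a) := by rw [map_neg, sub_zero, neg_neg]
    rw [Prod.mk_sub_mk, h1, h2]
  rw [hclass, hr]

end Ext

section Ext2
variable {R : Type u} [CommRing R]

/-- Extension of maps along an injection whose cokernel is an extension of two
Gorenstein projective modules. -/
theorem gp_extmap2 (X Y : ModuleCat.{v} R) (hX : IsGorensteinProjective R X)
    (hY : IsGorensteinProjective R Y)
    (Zm V E : ModuleCat.{v} R) (μ : Zm →ₗ[R] V) (hμ : Function.Injective μ)
    (τ : V →ₗ[R] E) (hτ : Function.Surjective τ) (hk : LinearMap.range μ = LinearMap.ker τ)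
    (u : X →ₗ[R] E) (v : E →ₗ[R] Y) (hu : Function.Injective u) (hv : Function.Surjective v)
    (huv : LinearMap.range u = LinearMap.ker v)
    (Q : ModuleCat.{v} R) (hQ : Module.Projective R Q) (g : Zm →ₗ[R] Q) :
    ∃ h : V →ₗ[R] Q, h ∘ₗ μ = g := by
  let V₁sub : Submodule R V := Submodule.comap τ (LinearMap.range u)
  let V₁ := ModuleCat.of R V₁sub
  have hμmem : ∀ z : Zm, μ z ∈ V₁sub := by
    intro z
    have : τ (μ z) = 0 := by
      have : μ z ∈ LinearMap.ker τ := hk ▸ LinearMap.mem_range_self _ z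
      exact this
    show τ (μ z) ∈ LinearMap.range u
    rw [this]
    exact zero_mem _
  let μ' : Zm →ₗ[R] V₁ := LinearMap.codRestrict V₁sub μ hμmem
  have hμ' : Function.Injective μ' := by
    intro a b hab
    exact hμ (congrArg Subtype.val hab)
  have hτmem : ∀ y : V₁, τ (V₁sub.subtype y) ∈ LinearMap.range u := fun y => y.2
  let π₁ : V₁ →ₗ[R] X := factorInj u hu (τ ∘ₗ V₁sub.subtype) hτmem
  have hπ₁ap : ∀ y : V₁, u (π₁ y) = τ y.1 := fun y => factorInj_apply _ _ _ _ y
  have hπ₁ : Function.Surjective π₁ := by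
    intro x
    obtain ⟨wv, hwv⟩ := hτ (u x)
    have hwv1 : wv ∈ V₁sub := by
      show τ wv ∈ LinearMap.range u
      rw [hwv]; exact LinearMap.mem_range_self _ x
    refine ⟨⟨wv, hwv1⟩, ?_⟩
    apply hu
    rw [hπ₁ap]
    exact hwv
  have hexact₁ : LinearMap.range μ' = LinearMap.ker π₁ := by
    apply le_antisymm
    · rintro _ ⟨z, rfl⟩
      rw [LinearMap.mem_ker]
      apply hu
      rw [hπ₁ap, map_zero]
      show τ (μ z) = 0
      have : μ z ∈ LinearMap.ker τ := hk ▸ LinearMap.mem_range_self _ z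
      exact this
    · intro y hy
      have h0 : τ y.1 = 0 := by
        rw [← hπ₁ap y, show π₁ y = 0 from hy, map_zero]
      have : y.1 ∈ LinearMap.range μ := by rw [hk]; exact h0
      obtain ⟨z, hz⟩ := this
      exact ⟨z, Subtype.ext hz⟩
  obtain ⟨h₁, hh₁⟩ := gp_extmap X hX Zm V₁ μ' π₁ hμ' hπ₁ hexact₁ Q hQ g
  let π₂ : V →ₗ[R] Y := v ∘ₗ τ
  have hπ₂ : Function.Surjective π₂ := by
    intro y
    obtain ⟨e, he⟩ := hv y
    obtain ⟨w0, hw0⟩ := hτ e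
    exact ⟨w0, by show v (τ w0) = y; rw [hw0, he]⟩
  have hexact₂ : LinearMap.range V₁sub.subtype = LinearMap.ker π₂ := by
    rw [Submodule.range_subtype]
    ext x
    show τ x ∈ LinearMap.range u ↔ v (τ x) = 0
    rw [huv]
    exact Iff.rfl
  obtain ⟨h, hh⟩ := gp_extmap Y hY V₁ V V₁sub.subtype π₂ (Submodule.injective_subtype _) hπ₂
    hexact₂ Q hQ h₁
  refine ⟨h, ?_⟩
  apply LinearMap.ext
  intro z
  have e1 : h (V₁sub.subtype (μ' z)) = h₁ (μ' z) := congrArg (fun f => f (μ' z)) hh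
  have e2 : h₁ (μ' z) = g z := congrArg (fun f => f z) hh₁
  show h (μ z) = g z
  rw [show μ z = V₁sub.subtype (μ' z) from rfl, e1, e2]

end Ext2

section SmallGP
variable {R : Type u} [CommRing R]

theorem sgp_isGP (M : ModuleCat.{v} R) (h : IsStronglyGorensteinProjective R M) :
    IsGorensteinProjective R M := by
  obtain ⟨P, f, hP, hrk, ⟨e⟩, hhom⟩ := h
  exact ⟨fun _ => P, fun _ => f, fun _ => hP, fun _ => hrk, ⟨e⟩,
    fun Q hQ i g hg => hhom Q hQ g hg⟩

theorem proj_isGP (W : ModuleCat.{v} R) (hW : Module.Projective R W) :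
    IsGorensteinProjective R W := by
  haveI := hW
  let d : (W × W : Type v) →ₗ[R] (W × W : Type v) :=
    (LinearMap.inl R W W) ∘ₗ (LinearMap.snd R W W)
  have hd : ∀ z : W × W, d z = (z.2, 0) := fun z => rfl
  have hrange : LinearMap.range d = LinearMap.range (LinearMap.inl R W W) := by
    apply le_antisymm
    · rintro _ ⟨z, rfl⟩
      exact ⟨z.2, rfl⟩
    · rintro _ ⟨x, rfl⟩
      exact ⟨(0, x), rfl⟩
  have hker : LinearMap.ker d = LinearMap.range (LinearMap.inl R W W) := by
    ext z
    constructor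
    · intro hz
      have : (z.2, (0:W)) = (0 : W × W) := hz
      have h2 : z.2 = 0 := congrArg Prod.fst this
      refine ⟨z.1, ?_⟩
      show ((z.1, (0:W)) : W × W) = z
      rw [← h2]
    · rintro ⟨x, rfl⟩
      show ((0 : W), (0 : W)) = 0
      rfl
  refine ⟨fun _ => ModuleCat.of R (W × W), fun _ => d,
    fun _ => (inferInstanceAs (Module.Projective R (↑W × ↑W))),
    fun _ => hrange.trans hker.symm, ⟨?_⟩, ?_⟩
  · exact (LinearEquiv.ofInjective (LinearMap.inl R W W) LinearMap.inl_injective).trans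
      (LinearEquiv.ofEq _ _ hrange.symm)
  · intro Q hQ i g hg
    refine ⟨g ∘ₗ (LinearMap.inr R W W) ∘ₗ (LinearMap.fst R W W), ?_⟩
    apply LinearMap.ext
    intro z
    have hz1 : g (z.2, (0:W)) = 0 := by
      have := congrArg (fun f => f ((0:W), z.2)) hg
      simpa [hd] using this
    show g ((0:W), z.2) = g z
    have hsplit : (z.1, (0:W)) + ((0:W), z.2) = z := by
      rw [Prod.mk_add_mk, add_zero, zero_add]
    have hz2 : g (z.1, (0:W)) = 0 := by
      have := congrArg (fun f => f (((0:W), z.1) : W × W)) hg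
      simpa [hd] using this
    conv_rhs => rw [← hsplit]
    rw [map_add, hz2, zero_add]

end SmallGP

section Horseshoe
variable {R : Type u} [CommRing R]

structure GPack (R : Type u) [CommRing R] (G K PP : ModuleCat.{v} R) where
  Z : ModuleCat.{v} R
  u : G →ₗ[R] Z
  v : Z →ₗ[R] K
  j : Z →ₗ[R] PP
  p : PP →ₗ[R] Z
  hu : Function.Injective u
  hv : Function.Surjective v
  huv : LinearMap.range u = LinearMap.ker v
  hj : Function.Injective j
  hp : Function.Surjective p

structure ExtCtx (R : Type u) [CommRing R] (G K P P' : ModuleCat.{v} R) where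
  hGgp : IsGorensteinProjective R G
  hKgp : IsGorensteinProjective R K
  hP : Module.Projective R P
  hP' : Module.Projective R P'
  iG : G →ₗ[R] P
  q : P →ₗ[R] G
  hiG : Function.Injective iG
  hq : Function.Surjective q
  hGseq : LinearMap.range iG = LinearMap.ker q
  i' : K →ₗ[R] P'
  q' : P' →ₗ[R] K
  hi' : Function.Injective i'
  hq' : Function.Surjective q'
  hKseq : LinearMap.range i' = LinearMap.ker q'

variable {G K P P' : ModuleCat.{v} R}

def PPm (P P' : ModuleCat.{v} R) : ModuleCat.{v} R := ModuleCat.of R (P × P')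

def JStr (c : ExtCtx R G K P P') (pk : GPack R G K (PPm P P')) : Prop :=
  ∃ w : pk.Z →ₗ[R] P, pk.j = LinearMap.prod w (c.i' ∘ₗ pk.v) ∧ w ∘ₗ pk.u = c.iG

def PStr (c : ExtCtx R G K P P') (pk : GPack R G K (PPm P P')) : Prop :=
  ∃ ω : P' →ₗ[R] pk.Z,
    pk.p = pk.u ∘ₗ c.q ∘ₗ LinearMap.fst R P P' + ω ∘ₗ LinearMap.snd R P P' ∧ pk.v ∘ₗ ω = c.q'

theorem exists_w (c : ExtCtx R G K P P') (Z : ModuleCat.{v} R)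
    (uu : G →ₗ[R] Z) (vv : Z →ₗ[R] K)
    (hu : Function.Injective uu) (hv : Function.Surjective vv)
    (huv : LinearMap.range uu = LinearMap.ker vv) :
    ∃ w : Z →ₗ[R] P, w ∘ₗ uu = c.iG :=
  gp_extmap K c.hKgp G Z uu vv hu hv huv P c.hP c.iG

theorem j_inj (c : ExtCtx R G K P P') (Z : ModuleCat.{v} R)
    (uu : G →ₗ[R] Z) (vv : Z →ₗ[R] K)
    (hu : Function.Injective uu) (huv : LinearMap.range uu = LinearMap.ker vv)
    (w : Z →ₗ[R] P) (hw : w ∘ₗ uu = c.iG) :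
    Function.Injective (LinearMap.prod w (c.i' ∘ₗ vv)) := by
  rw [injective_iff_map_eq_zero]
  intro z hz
  have h2 : c.i' (vv z) = 0 := by
    have := congrArg Prod.snd hz
    simpa using this
  have hvz : vv z = 0 := c.hi' (by rw [h2, map_zero])
  have : z ∈ LinearMap.range uu := by rw [huv]; exact hvz
  obtain ⟨y, rfl⟩ := this
  have h1 : w (uu y) = 0 := by
    have := congrArg Prod.fst hz
    simpa using this
  have h3 : w (uu y) = c.iG y := by
    have := LinearMap.congr_fun hw y
    simpa using this
  have hy0 : y = 0 := c.hiG (by rw [← h3, h1, map_zero])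
  rw [hy0, map_zero]

theorem exists_omega (c : ExtCtx R G K P P') (Z : ModuleCat.{v} R)
    (vv : Z →ₗ[R] K) (hv : Function.Surjective vv) :
    ∃ ω : P' →ₗ[R] Z, vv ∘ₗ ω = c.q' := by
  haveI := c.hP'
  exact Module.projective_lifting_property vv c.q' hv

theorem p_surj (c : ExtCtx R G K P P') (Z : ModuleCat.{v} R)
    (uu : G →ₗ[R] Z) (vv : Z →ₗ[R] K)
    (huv : LinearMap.range uu = LinearMap.ker vv)
    (ω : P' →ₗ[R] Z) (hω : vv ∘ₗ ω = c.q') :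
    Function.Surjective
      (uu ∘ₗ c.q ∘ₗ LinearMap.fst R P P' + ω ∘ₗ LinearMap.snd R P P') := by
  intro z
  obtain ⟨cc, hcc⟩ := c.hq' (vv z)
  have hωcc : vv (ω cc) = c.q' cc := by
    have := LinearMap.congr_fun hω cc
    simpa using this
  have hz2 : vv (z - ω cc) = 0 := by
    rw [map_sub, hωcc, hcc, sub_self]
  have : z - ω cc ∈ LinearMap.range uu := by rw [huv]; exact hz2
  obtain ⟨y, hy⟩ := this
  obtain ⟨x, hx⟩ := c.hq y
  refine ⟨(x, cc), ?_⟩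
  show uu (c.q x) + ω cc = z
  rw [hx, hy, sub_add_cancel]

theorem gpack_right (c : ExtCtx R G K P P') (pk : GPack R G K (PPm P P')) (hJ : JStr c pk) :
    ∃ pk' : GPack R G K (PPm P P'),
      LinearMap.ker pk'.p = LinearMap.range pk.j ∧ JStr c pk' := by
  obtain ⟨w, hjw, hwu⟩ := hJ
  have hj1 : ∀ z, (pk.j z).1 = w z := by
    intro z
    rw [hjw]
    rfl
  have hj2 : ∀ z, (pk.j z).2 = c.i' (pk.v z) := by
    intro z
    rw [hjw]
    rfl
  have hwuap : ∀ y, w (pk.u y) = c.iG y := by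
    intro y
    have := LinearMap.congr_fun hwu y
    simpa using this
  set Wr : Submodule R (↑P × ↑P') := LinearMap.range pk.j with hWr
  let Z' := ModuleCat.of R ((↑P × ↑P') ⧸ Wr)
  let m : ↑P →ₗ[R] Z' := Wr.mkQ ∘ₗ LinearMap.inl R P P'
  have hm0 : ∀ y : ↑G, m (c.iG y) = 0 := by
    intro y
    show Wr.mkQ (c.iG y, 0) = 0
    apply (Submodule.Quotient.mk_eq_zero Wr).2
    refine ⟨pk.u y, ?_⟩
    have hv0 : pk.v (pk.u y) = 0 := by
      have : pk.u y ∈ LinearMap.ker pk.v := pk.huv ▸ LinearMap.mem_range_self _ y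
      exact this
    rw [hjw]
    show ((w (pk.u y), c.i' (pk.v (pk.u y))) : ↑P × ↑P') = (c.iG y, 0)
    rw [Prod.mk.injEq]
    exact ⟨hwuap y, by rw [hv0, map_zero]⟩
  have hker_m : ∀ x : ↑P, m x = 0 → x ∈ LinearMap.range c.iG := by
    intro x hx
    have : ((x, (0 : ↑P')) : ↑P × ↑P') ∈ Wr := (Submodule.Quotient.mk_eq_zero Wr).1 hx
    obtain ⟨z, hz⟩ := this
    rw [hjw] at hz
    have hz' : ((w z, c.i' (pk.v z)) : ↑P × ↑P') = (x, 0) := hz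
    rw [Prod.mk.injEq] at hz'
    obtain ⟨hz1, hz2⟩ := hz'
    have hvz : pk.v z = 0 := c.hi' (by rw [hz2, map_zero])
    have : z ∈ LinearMap.range pk.u := by rw [pk.huv]; exact hvz
    obtain ⟨y, rfl⟩ := this
    refine ⟨y, ?_⟩
    rw [← hwuap, hz1]
  have hkerq_le : LinearMap.ker c.q ≤ LinearMap.ker m := by
    intro x hx
    rw [← c.hGseq] at hx
    obtain ⟨y, rfl⟩ := hx
    exact hm0 y
  let u' : ↑G →ₗ[R] Z' := factorSurj c.q c.hq m hkerq_le
  have hu'q : ∀ x, u' (c.q x) = m x := factorSurj_apply c.q c.hq m hkerq_le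
  have hu' : Function.Injective u' := by
    rw [injective_iff_map_eq_zero]
    intro y hy
    obtain ⟨x, rfl⟩ := c.hq y
    rw [hu'q] at hy
    obtain ⟨y0, rfl⟩ := hker_m x hy
    have : c.iG y0 ∈ LinearMap.ker c.q := c.hGseq ▸ LinearMap.mem_range_self _ _
    exact this
  have hkill : Wr ≤ LinearMap.ker (c.q' ∘ₗ LinearMap.snd R P P') := by
    rintro _ ⟨z, rfl⟩
    rw [hjw]
    show c.q' (c.i' (pk.v z)) = 0
    have : c.i' (pk.v z) ∈ LinearMap.ker c.q' := c.hKseq ▸ LinearMap.mem_range_self _ _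
    exact this
  let v' : Z' →ₗ[R] ↑K := Wr.liftQ (c.q' ∘ₗ LinearMap.snd R P P') hkill
  have hv'mk : ∀ zz : ↑P × ↑P', v' (Wr.mkQ zz) = c.q' zz.2 := fun _ => rfl
  have hv' : Function.Surjective v' := by
    intro kk
    obtain ⟨cc, hcc⟩ := c.hq' kk
    exact ⟨Wr.mkQ (0, cc), by rw [hv'mk]; exact hcc⟩
  have hu'v' : LinearMap.range u' = LinearMap.ker v' := by
    apply le_antisymm
    · rintro _ ⟨y, rfl⟩
      obtain ⟨x, rfl⟩ := c.hq y
      rw [LinearMap.mem_ker, hu'q]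
      show v' (Wr.mkQ (x, 0)) = 0
      rw [hv'mk]
      exact map_zero c.q'
    · rintro zz hzz
      obtain ⟨⟨x, cc⟩, rfl⟩ := Wr.mkQ_surjective zz
      have hqc : c.q' cc = 0 := by rw [← hv'mk (x, cc)]; exact hzz
      have : cc ∈ LinearMap.range c.i' := by rw [c.hKseq]; exact hqc
      obtain ⟨kk, rfl⟩ := this
      obtain ⟨z, hz⟩ := pk.hv kk
      refine ⟨c.q (x - w z), ?_⟩
      rw [hu'q]
      show Wr.mkQ (x - w z, 0) = Wr.mkQ (x, c.i' kk)
      apply mkQ_eq_of_sub_mem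
      refine ⟨-z, ?_⟩
      rw [hjw, Prod.mk_sub_mk, Prod.mk.injEq]
      constructor
      · show w (-z) = x - w z - x
        rw [map_neg]
        abel
      · show c.i' (pk.v (-z)) = 0 - c.i' kk
        rw [map_neg, map_neg, hz, zero_sub]
  obtain ⟨w', hw'⟩ := exists_w c Z' u' v' hu' hv' hu'v'
  exact ⟨⟨Z', u', v', LinearMap.prod w' (c.i' ∘ₗ v'), Wr.mkQ, hu', hv', hu'v',
      j_inj c Z' u' v' hu' hu'v' w' hw', Wr.mkQ_surjective⟩,
      Submodule.ker_mkQ Wr, ⟨w', rfl, hw'⟩⟩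

theorem gpack_left (c : ExtCtx R G K P P') (pk : GPack R G K (PPm P P')) (hS : PStr c pk) :
    ∃ pk' : GPack R G K (PPm P P'),
      LinearMap.ker pk.p = LinearMap.range pk'.j ∧ PStr c pk' := by
  obtain ⟨ω, hpw, hvω⟩ := hS
  have hpz : ∀ zz : ↑P × ↑P', pk.p zz = pk.u (c.q zz.1) + ω zz.2 := by
    intro zz
    rw [hpw]
    rfl
  have hvωap : ∀ cc, pk.v (ω cc) = c.q' cc := by
    intro cc
    have := LinearMap.congr_fun hvω cc
    simpa using this
  let Zsub : Submodule R (↑P × ↑P') := LinearMap.ker pk.p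
  let Z'' := ModuleCat.of R Zsub
  let j'' : Z'' →ₗ[R] (PPm P P') := Zsub.subtype
  have hmemu : ∀ y : ↑G, ((c.iG y, (0 : ↑P')) : ↑P × ↑P') ∈ Zsub := by
    intro y
    show pk.p (c.iG y, 0) = 0
    rw [hpz]
    have hq0 : c.q (c.iG y) = 0 := by
      have : c.iG y ∈ LinearMap.ker c.q := c.hGseq ▸ LinearMap.mem_range_self _ _
      exact this
    show pk.u (c.q (c.iG y)) + ω 0 = 0
    rw [hq0, map_zero, map_zero, add_zero]
  let u'' : ↑G →ₗ[R] Z'' :=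
    LinearMap.codRestrict Zsub ((LinearMap.inl R P P') ∘ₗ c.iG) (fun y => hmemu y)
  have hu'' : Function.Injective u'' := by
    intro a b hab
    have := congrArg (fun t => (Subtype.val t).1) hab
    exact c.hiG this
  have hsndmem : ∀ z : ↑Z'', (Zsub.subtype z).2 ∈ LinearMap.range c.i' := by
    rintro ⟨⟨x, cc⟩, hz⟩
    rw [c.hKseq]
    have hz0 : pk.p (x, cc) = 0 := hz
    have hv0 : pk.v (pk.p (x, cc)) = 0 := by rw [hz0, map_zero]
    rw [hpz] at hv0
    rw [map_add] at hv0
    have h1 : pk.v (pk.u (c.q x)) = 0 := by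
      have : pk.u (c.q x) ∈ LinearMap.ker pk.v := pk.huv ▸ LinearMap.mem_range_self _ _
      exact this
    rw [h1, zero_add, hvωap] at hv0
    exact hv0
  let v'' : ↑Z'' →ₗ[R] ↑K :=
    factorInj c.i' c.hi' ((LinearMap.snd R P P') ∘ₗ Zsub.subtype) hsndmem
  have hv''ap : ∀ z : ↑Z'', c.i' (v'' z) = (Zsub.subtype z).2 := fun z =>
    factorInj_apply _ _ _ _ z
  have hv'' : Function.Surjective v'' := by
    intro kk
    have h0 : pk.v (ω (c.i' kk)) = 0 := by
      rw [hvωap]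
      have : c.i' kk ∈ LinearMap.ker c.q' := c.hKseq ▸ LinearMap.mem_range_self _ _
      exact this
    have : ω (c.i' kk) ∈ LinearMap.range pk.u := by rw [pk.huv]; exact h0
    obtain ⟨y, hy⟩ := this
    obtain ⟨x, hx⟩ := c.hq y
    have hmem : ((-x, c.i' kk) : ↑P × ↑P') ∈ Zsub := by
      show pk.p (-x, c.i' kk) = 0
      rw [hpz]
      show pk.u (c.q (-x)) + ω (c.i' kk) = 0
      rw [map_neg, map_neg, hx, hy, neg_add_cancel]
    refine ⟨⟨(-x, c.i' kk), hmem⟩, ?_⟩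
    apply c.hi'
    rw [hv''ap]
    rfl
  have hu''v'' : LinearMap.range u'' = LinearMap.ker v'' := by
    apply le_antisymm
    · rintro _ ⟨y, rfl⟩
      rw [LinearMap.mem_ker]
      apply c.hi'
      rw [hv''ap, map_zero]
      rfl
    · rintro ⟨⟨x, cc⟩, hz⟩ hzz
      have h5 := hv''ap ⟨(x, cc), hz⟩
      rw [show v'' ⟨(x, cc), hz⟩ = 0 from hzz, map_zero] at h5
      have hcc : cc = 0 := h5.symm
      have hz0 : pk.p (x, cc) = 0 := hz
      rw [hpz] at hz0
      have hz1 : pk.u (c.q x) = 0 := by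
        rw [hcc] at hz0
        simpa using hz0
      have hqx : c.q x = 0 := by
        apply pk.hu
        rw [hz1, map_zero]
      have : x ∈ LinearMap.range c.iG := by rw [c.hGseq]; exact hqx
      obtain ⟨y, hy⟩ := this
      refine ⟨y, ?_⟩
      apply Subtype.ext
      show ((c.iG y, (0 : ↑P')) : ↑P × ↑P') = (x, cc)
      rw [hy, hcc]
  obtain ⟨ω'', hω''⟩ := exists_omega c Z'' v'' hv''
  exact ⟨⟨Z'', u'', v'', j'',
      u'' ∘ₗ c.q ∘ₗ LinearMap.fst R P P' + ω'' ∘ₗ LinearMap.snd R P P',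
      hu'', hv'', hu''v'', Submodule.injective_subtype _,
      p_surj c Z'' u'' v'' hu''v'' ω'' hω''⟩,
      (Submodule.range_subtype Zsub).symm, ⟨ω'', rfl, hω''⟩⟩

noncomputable def pk0 (c : ExtCtx R G K P P') (B : ModuleCat.{v} R)
    (ι : G →ₗ[R] B) (lam : B →ₗ[R] K) (hι : Function.Injective ι)
    (hlam : Function.Surjective lam) (hseq : LinearMap.range ι = LinearMap.ker lam) :
    GPack R G K (PPm P P') :=
  ⟨B, ι, lam,
    LinearMap.prod (exists_w c B ι lam hι hlam hseq).choose (c.i' ∘ₗ lam),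
    ι ∘ₗ c.q ∘ₗ LinearMap.fst R P P' +
      (exists_omega c B lam hlam).choose ∘ₗ LinearMap.snd R P P',
    hι, hlam, hseq,
    j_inj c B ι lam hι hseq _ (exists_w c B ι lam hι hlam hseq).choose_spec,
    p_surj c B ι lam hseq _ (exists_omega c B lam hlam).choose_spec⟩

theorem pk0_jstr (c : ExtCtx R G K P P') (B : ModuleCat.{v} R)
    (ι : G →ₗ[R] B) (lam : B →ₗ[R] K) (hι : Function.Injective ι)
    (hlam : Function.Surjective lam) (hseq : LinearMap.range ι = LinearMap.ker lam) :
    JStr c (pk0 c B ι lam hι hlam hseq) :=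
  ⟨(exists_w c B ι lam hι hlam hseq).choose, rfl, (exists_w c B ι lam hι hlam hseq).choose_spec⟩

theorem pk0_pstr (c : ExtCtx R G K P P') (B : ModuleCat.{v} R)
    (ι : G →ₗ[R] B) (lam : B →ₗ[R] K) (hι : Function.Injective ι)
    (hlam : Function.Surjective lam) (hseq : LinearMap.range ι = LinearMap.ker lam) :
    PStr c (pk0 c B ι lam hι hlam hseq) :=
  ⟨(exists_omega c B lam hlam).choose, rfl, (exists_omega c B lam hlam).choose_spec⟩

noncomputable def posP (c : ExtCtx R G K P P') (B : ModuleCat.{v} R)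
    (ι : G →ₗ[R] B) (lam : B →ₗ[R] K) (hι : Function.Injective ι)
    (hlam : Function.Surjective lam) (hseq : LinearMap.range ι = LinearMap.ker lam) :
    ℕ → Σ' pk : GPack R G K (PPm P P'), JStr c pk
  | 0 => ⟨pk0 c B ι lam hι hlam hseq, pk0_jstr c B ι lam hι hlam hseq⟩
  | n + 1 =>
    ⟨(gpack_right c (posP c B ι lam hι hlam hseq n).1 (posP c B ι lam hι hlam hseq n).2).choose,
     (gpack_right c (posP c B ι lam hι hlam hseq n).1
        (posP c B ι lam hι hlam hseq n).2).choose_spec.2⟩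

theorem posP_glue (c : ExtCtx R G K P P') (B : ModuleCat.{v} R)
    (ι : G →ₗ[R] B) (lam : B →ₗ[R] K) (hι : Function.Injective ι)
    (hlam : Function.Surjective lam) (hseq : LinearMap.range ι = LinearMap.ker lam) (n : ℕ) :
    LinearMap.ker ((posP c B ι lam hι hlam hseq (n+1)).1.p)
      = LinearMap.range ((posP c B ι lam hι hlam hseq n).1.j) :=
  (gpack_right c (posP c B ι lam hι hlam hseq n).1
    (posP c B ι lam hι hlam hseq n).2).choose_spec.1

noncomputable def negP (c : ExtCtx R G K P P') (B : ModuleCat.{v} R)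
    (ι : G →ₗ[R] B) (lam : B →ₗ[R] K) (hι : Function.Injective ι)
    (hlam : Function.Surjective lam) (hseq : LinearMap.range ι = LinearMap.ker lam) :
    ℕ → Σ' pk : GPack R G K (PPm P P'), PStr c pk
  | 0 => ⟨pk0 c B ι lam hι hlam hseq, pk0_pstr c B ι lam hι hlam hseq⟩
  | n + 1 =>
    ⟨(gpack_left c (negP c B ι lam hι hlam hseq n).1 (negP c B ι lam hι hlam hseq n).2).choose,
     (gpack_left c (negP c B ι lam hι hlam hseq n).1
        (negP c B ι lam hι hlam hseq n).2).choose_spec.2⟩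

theorem negP_glue (c : ExtCtx R G K P P') (B : ModuleCat.{v} R)
    (ι : G →ₗ[R] B) (lam : B →ₗ[R] K) (hι : Function.Injective ι)
    (hlam : Function.Surjective lam) (hseq : LinearMap.range ι = LinearMap.ker lam) (n : ℕ) :
    LinearMap.ker ((negP c B ι lam hι hlam hseq n).1.p)
      = LinearMap.range ((negP c B ι lam hι hlam hseq (n+1)).1.j) :=
  (gpack_left c (negP c B ι lam hι hlam hseq n).1
    (negP c B ι lam hι hlam hseq n).2).choose_spec.1

noncomputable def packZ (c : ExtCtx R G K P P') (B : ModuleCat.{v} R)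
    (ι : G →ₗ[R] B) (lam : B →ₗ[R] K) (hι : Function.Injective ι)
    (hlam : Function.Surjective lam) (hseq : LinearMap.range ι = LinearMap.ker lam) :
    ℤ → GPack R G K (PPm P P')
  | Int.ofNat n => (posP c B ι lam hι hlam hseq n).1
  | Int.negSucc n => (negP c B ι lam hι hlam hseq (n+1)).1

theorem packZ_glue (c : ExtCtx R G K P P') (B : ModuleCat.{v} R)
    (ι : G →ₗ[R] B) (lam : B →ₗ[R] K) (hι : Function.Injective ι)
    (hlam : Function.Surjective lam) (hseq : LinearMap.range ι = LinearMap.ker lam) :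
    ∀ i : ℤ, LinearMap.ker ((packZ c B ι lam hι hlam hseq (i+1)).p)
      = LinearMap.range ((packZ c B ι lam hι hlam hseq i).j) := by
  intro i
  match i with
  | Int.ofNat n => exact posP_glue c B ι lam hι hlam hseq n
  | Int.negSucc 0 => exact negP_glue c B ι lam hι hlam hseq 0
  | Int.negSucc (m+1) => exact negP_glue c B ι lam hι hlam hseq (m+1)

theorem gp_ext (c : ExtCtx R G K P P') (B : ModuleCat.{v} R)
    (ι : G →ₗ[R] B) (lam : B →ₗ[R] K) (hι : Function.Injective ι)
    (hlam : Function.Surjective lam) (hseq : LinearMap.range ι = LinearMap.ker lam) :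
    IsGorensteinProjective R B := by
  haveI := c.hP
  haveI := c.hP'
  let pc : ℤ → GPack R G K (PPm P P') := packZ c B ι lam hι hlam hseq
  have hglue : ∀ i : ℤ, LinearMap.ker ((pc (i+1)).p) = LinearMap.range ((pc i).j) :=
    packZ_glue c B ι lam hι hlam hseq
  have hrangecomp : ∀ i : ℤ, LinearMap.range ((pc i).j ∘ₗ (pc i).p)
      = LinearMap.range ((pc i).j) := by
    intro i
    rw [LinearMap.range_comp, LinearMap.range_eq_top.2 (pc i).hp, Submodule.map_top]
  have hkercomp : ∀ i : ℤ, LinearMap.ker ((pc i).j ∘ₗ (pc i).p)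
      = LinearMap.ker ((pc i).p) := by
    intro i
    rw [LinearMap.ker_comp, LinearMap.ker_eq_bot.2 (pc i).hj, Submodule.comap_bot]
  refine ⟨fun _ => PPm P P', fun i => (pc i).j ∘ₗ (pc i).p,
    fun _ => inferInstanceAs (Module.Projective R (↑P × ↑P')), ?_, ⟨?_⟩, ?_⟩
  · intro i
    rw [hrangecomp i, hkercomp (i+1), hglue i]
  · exact ((LinearEquiv.ofInjective (pc 0).j (pc 0).hj).trans
      (LinearEquiv.ofEq _ _ (hrangecomp 0).symm))
  · intro Q hQ i g hg
    have hji : LinearMap.range ((pc i).j) ≤ LinearMap.ker g := by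
      rintro _ ⟨z, rfl⟩
      obtain ⟨x, rfl⟩ := (pc i).hp z
      have := LinearMap.congr_fun hg x
      simpa using this
    have hker_le : LinearMap.ker ((pc (i+1)).p) ≤ LinearMap.ker g := by
      rw [hglue i]
      exact hji
    obtain ⟨h, hh⟩ := gp_extmap2 G K c.hGgp c.hKgp ((pc (i+1)).Z) (PPm P P') ((pc (i+1+1)).Z)
        ((pc (i+1)).j) ((pc (i+1)).hj) ((pc (i+1+1)).p) ((pc (i+1+1)).hp) (hglue (i+1)).symm
        ((pc (i+1+1)).u) ((pc (i+1+1)).v) ((pc (i+1+1)).hu) ((pc (i+1+1)).hv)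
        ((pc (i+1+1)).huv) Q hQ (factorSurj ((pc (i+1)).p) ((pc (i+1)).hp) g hker_le)
    refine ⟨h, ?_⟩
    apply LinearMap.ext
    intro x
    have e1 : h ((pc (i+1)).j ((pc (i+1)).p x))
        = factorSurj ((pc (i+1)).p) ((pc (i+1)).hp) g hker_le ((pc (i+1)).p x) := by
      have := LinearMap.congr_fun hh ((pc (i+1)).p x)
      simpa using this
    have e2 : factorSurj ((pc (i+1)).p) ((pc (i+1)).hp) g hker_le ((pc (i+1)).p x) = g x :=
      factorSurj_apply _ _ _ _ x
    show h ((pc (i+1)).j ((pc (i+1)).p x)) = g x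
    rw [e1, e2]

end Horseshoe

section Final
variable {R : Type u} [CommRing R]

theorem sgp_data (M : ModuleCat.{v} R) (h : IsStronglyGorensteinProjective R M) :
    ∃ (P : ModuleCat.{v} R) (ιm : M →ₗ[R] P) (qm : P →ₗ[R] M),
      Module.Projective R P ∧ Function.Injective ιm ∧ Function.Surjective qm ∧
      LinearMap.range ιm = LinearMap.ker qm := by
  obtain ⟨P, f, hP, hrk, ⟨e⟩, _⟩ := h
  refine ⟨P, (LinearMap.range f).subtype ∘ₗ (e : M →ₗ[R] LinearMap.range f),
    (e.symm : (LinearMap.range f) →ₗ[R] M) ∘ₗ f.rangeRestrict, hP, ?_, ?_, ?_⟩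
  · exact (Submodule.injective_subtype _).comp e.injective
  · intro m
    obtain ⟨x, hx⟩ := f.surjective_rangeRestrict (e m)
    exact ⟨x, by show e.symm (f.rangeRestrict x) = m; rw [hx]; simp⟩
  · have h1 : LinearMap.range ((LinearMap.range f).subtype ∘ₗ (e : M →ₗ[R] LinearMap.range f))
        = LinearMap.range f := by
      rw [LinearMap.range_comp, LinearEquiv.range, Submodule.map_top, Submodule.range_subtype]
    have h2 : LinearMap.ker ((e.symm : (LinearMap.range f) →ₗ[R] M) ∘ₗ f.rangeRestrict)
        = LinearMap.ker f := by
      rw [LinearMap.ker_comp, LinearEquiv.ker, Submodule.comap_bot, LinearMap.ker_rangeRestrict]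
    rw [h1, h2, hrk]

theorem punit_projective : Module.Projective R PUnit.{v+1} :=
  ⟨⟨0, fun x => Subsingleton.elim _ _⟩⟩

theorem zero_gp : IsGorensteinProjective R (ModuleCat.of R PUnit.{v+1}) :=
  proj_isGP (ModuleCat.of R PUnit.{v+1}) punit_projective

end Final

theorem main_forward {R : Type u} [CommRing R]
    (H : ∀ M : ModuleCat.{v} R,
      IsGorensteinProjective R M → IsStronglyGorensteinProjective R M)
    (M : ModuleCat.{v} R) (hM : GorensteinProjDimLE R 1 M) :
    ∃ (Q : ModuleCat.{v} R) (f : M →ₗ[R] Q) (g : Q →ₗ[R] M),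
      ProjDimLE R 1 Q ∧ Function.Injective f ∧ Function.Surjective g ∧
      LinearMap.range f = LinearMap.ker g := by
  obtain ⟨G, K, fK, gM, hGgp, hfK, hgM, hfg, hKdim⟩ := hM
  have hKgp : IsGorensteinProjective R K := hKdim
  obtain ⟨P, iG, q, hP, hiG, hq, hGseq⟩ := sgp_data G (H G hGgp)
  obtain ⟨P', i', q', hP', hi', hq', hKseq⟩ := sgp_data K (H K hKgp)
  let π : P →ₗ[R] M := gM ∘ₗ q
  have hπ : Function.Surjective π := by
    intro m
    obtain ⟨x, hx⟩ := hgM m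
    obtain ⟨p0, hp0⟩ := hq x
    exact ⟨p0, by show gM (q p0) = m; rw [hp0, hx]⟩
  let Lsub : Submodule R P := LinearMap.ker π
  let L := ModuleCat.of R Lsub
  have hqiG : ∀ y, q (iG y) = 0 := by
    intro y
    have : iG y ∈ LinearMap.ker q := hGseq ▸ LinearMap.mem_range_self _ y
    exact this
  have hmemL : ∀ y : G, iG y ∈ Lsub := by
    intro y
    show gM (q (iG y)) = 0
    rw [hqiG, map_zero]
  let ιL : G →ₗ[R] L := LinearMap.codRestrict Lsub iG hmemL
  have hιL : Function.Injective ιL := fun a b hab => hiG (congrArg Subtype.val hab)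
  have hmemK : ∀ z : L, q (Lsub.subtype z) ∈ LinearMap.range fK := by
    intro z
    rw [hfg]
    exact z.2
  let lamL : L →ₗ[R] K := factorInj fK hfK (q ∘ₗ Lsub.subtype) hmemK
  have hlamLap : ∀ z : L, fK (lamL z) = q z.1 := fun z => factorInj_apply _ _ _ _ z
  have hlamL : Function.Surjective lamL := by
    intro k
    obtain ⟨x, hx⟩ := hq (fK k)
    have hxL : x ∈ Lsub := by
      show gM (q x) = 0
      rw [hx]
      have : fK k ∈ LinearMap.ker gM := hfg ▸ LinearMap.mem_range_self _ k
      exact this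
    refine ⟨⟨x, hxL⟩, ?_⟩
    apply hfK
    rw [hlamLap]
    exact hx
  have hexL : LinearMap.range ιL = LinearMap.ker lamL := by
    apply le_antisymm
    · rintro _ ⟨y, rfl⟩
      rw [LinearMap.mem_ker]
      apply hfK
      rw [hlamLap, map_zero]
      exact hqiG y
    · intro z hz
      have h0 : q z.1 = 0 := by
        rw [← hlamLap z, show lamL z = 0 from hz, map_zero]
      have : z.1 ∈ LinearMap.range iG := by rw [hGseq]; exact h0
      obtain ⟨y, hy⟩ := this
      exact ⟨y, Subtype.ext hy⟩
  let c : ExtCtx R G K P P' := ⟨hGgp, hKgp, hP, hP', iG, q, hiG, hq, hGseq, i', q', hi', hq', hKseq⟩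
  have hLgp : IsGorensteinProjective R L := gp_ext c L ιL lamL hιL hlamL hexL
  obtain ⟨PL, iL2, qL2, hPL, hiL2, hqL2, hLseq⟩ := sgp_data L (H L hLgp)
  obtain ⟨uu, huu⟩ := gp_extmap L hLgp L PL iL2 qL2 hiL2 hqL2 hLseq P hP Lsub.subtype
  have huuap : ∀ z : L, uu (iL2 z) = z.1 := by
    intro z
    have := LinearMap.congr_fun huu z
    exact this
  have hqLiL : ∀ z : L, qL2 (iL2 z) = 0 := by
    intro z
    have : iL2 z ∈ LinearMap.ker qL2 := hLseq ▸ LinearMap.mem_range_self _ z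
    exact this
  let Ψ : PL →ₗ[R] (↑P × ↑P : Type v) := LinearMap.prod (Lsub.subtype ∘ₗ qL2) (-uu)
  have hΨap : ∀ x : PL, Ψ x = (Lsub.subtype (qL2 x), -uu x) := fun x => rfl
  have hΨ : Function.Injective Ψ := by
    rw [injective_iff_map_eq_zero]
    intro x hx
    rw [hΨap] at hx
    have h1 : Lsub.subtype (qL2 x) = 0 := congrArg Prod.fst hx
    have hq0 : qL2 x = 0 := Subtype.ext h1
    have : x ∈ LinearMap.range iL2 := by rw [hLseq]; exact hq0
    obtain ⟨z, rfl⟩ := this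
    have h2 : -uu (iL2 z) = 0 := congrArg Prod.snd hx
    have h3 : z.1 = 0 := by rw [← huuap z]; exact neg_eq_zero.1 h2
    rw [show z = 0 from Subtype.ext h3, map_zero]
  let Qsub : Submodule R (↑P × ↑P) := LinearMap.range Ψ
  let QM := ModuleCat.of R ((↑P × ↑P) ⧸ Qsub)
  have hkillg : Qsub ≤ LinearMap.ker (π ∘ₗ LinearMap.fst R P P) := by
    rintro _ ⟨x, rfl⟩
    show π ((Ψ x).1) = 0
    rw [hΨap]
    exact (qL2 x).2
  let gQ : QM →ₗ[R] M := Qsub.liftQ (π ∘ₗ LinearMap.fst R P P) hkillg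
  have hgQmk : ∀ zz : ↑P × ↑P, gQ (Qsub.mkQ zz) = π zz.1 := fun _ => rfl
  have hgQ : Function.Surjective gQ := by
    intro m
    obtain ⟨x, hx⟩ := hπ m
    exact ⟨Qsub.mkQ (x, 0), by rw [hgQmk]; exact hx⟩
  let ftil : P →ₗ[R] QM := Qsub.mkQ ∘ₗ LinearMap.inr R P P
  have hftil_zero : ∀ x : P, x ∈ Lsub → ftil x = 0 := by
    intro x hx
    show Qsub.mkQ (0, x) = 0
    apply (Submodule.Quotient.mk_eq_zero Qsub).2
    refine ⟨iL2 (-⟨x, hx⟩), ?_⟩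
    rw [hΨap, Prod.mk.injEq]
    constructor
    · rw [hqLiL, map_zero]
    · rw [huuap]
      show -((-(⟨x, hx⟩ : Lsub) : Lsub) : ↑P) = x
      rw [NegMemClass.coe_neg, neg_neg]
  have hftil_ker : ∀ x : P, ftil x = 0 → x ∈ Lsub := by
    intro x hx
    have : ((0, x) : ↑P × ↑P) ∈ Qsub := (Submodule.Quotient.mk_eq_zero Qsub).1 hx
    obtain ⟨y, hy⟩ := this
    rw [hΨap] at hy
    have h1 : Lsub.subtype (qL2 y) = 0 := congrArg Prod.fst hy
    have hq0 : qL2 y = 0 := Subtype.ext h1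
    have : y ∈ LinearMap.range iL2 := by rw [hLseq]; exact hq0
    obtain ⟨z, rfl⟩ := this
    have h2 : -uu (iL2 z) = x := congrArg Prod.snd hy
    rw [huuap] at h2
    rw [← h2]
    exact neg_mem z.2
  have hLker : LinearMap.ker π ≤ LinearMap.ker ftil := fun x hx => hftil_zero x hx
  let fM : M →ₗ[R] QM := factorSurj π hπ ftil hLker
  have hfMap : ∀ x, fM (π x) = ftil x := factorSurj_apply π hπ ftil hLker
  have hfM : Function.Injective fM := by
    rw [injective_iff_map_eq_zero]
    intro m hm
    obtain ⟨x, rfl⟩ := hπ m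
    rw [hfMap] at hm
    exact hftil_ker x hm
  have hrangefM : LinearMap.range fM = LinearMap.ker gQ := by
    apply le_antisymm
    · rintro _ ⟨m, rfl⟩
      obtain ⟨x, rfl⟩ := hπ m
      rw [LinearMap.mem_ker, hfMap]
      show gQ (Qsub.mkQ (0, x)) = 0
      rw [hgQmk]
      exact map_zero π
    · intro zz hzz
      obtain ⟨⟨x₁, x₂⟩, rfl⟩ := Qsub.mkQ_surjective zz
      have hx₁ : π x₁ = 0 := by rw [← hgQmk (x₁, x₂)]; exact hzz
      obtain ⟨y, hy⟩ := hqL2 ⟨x₁, hx₁⟩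
      have heq : Qsub.mkQ (x₁, x₂) = Qsub.mkQ (0, x₂ + uu y) := by
        apply mkQ_eq_of_sub_mem
        refine ⟨y, ?_⟩
        rw [hΨap, Prod.mk_sub_mk, Prod.mk.injEq]
        constructor
        · rw [hy]
          simp
        · abel
      rw [heq]
      exact ⟨π (x₂ + uu y), by rw [hfMap]; rfl⟩
  haveI := hP
  refine ⟨QM, fM, gQ, ?_, hfM, hgQ, hrangefM⟩
  exact ⟨ModuleCat.of R (↑P × ↑P), PL, Ψ, Qsub.mkQ,
    inferInstanceAs (Module.Projective R (↑P × ↑P)), hΨ, Qsub.mkQ_surjective,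
    (Submodule.ker_mkQ Qsub).symm, hPL⟩

theorem main_backward {R : Type u} [CommRing R]
    (H : ∀ M : ModuleCat.{v} R, GorensteinProjDimLE R 1 M →
        ∃ (Q : ModuleCat.{v} R) (f : M →ₗ[R] Q) (g : Q →ₗ[R] M),
          ProjDimLE R 1 Q ∧ Function.Injective f ∧ Function.Surjective g ∧
          LinearMap.range f = LinearMap.ker g)
    (M : ModuleCat.{v} R) (hMgp : IsGorensteinProjective R M) :
    IsStronglyGorensteinProjective R M := by
  have hdim : GorensteinProjDimLE R 1 M := by
    refine ⟨M, ModuleCat.of R PUnit.{v+1}, 0, LinearMap.id, hMgp, ?_, fun m => ⟨m, rfl⟩, ?_, ?_⟩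
    · intro a b _
      exact Subsingleton.elim a b
    · rw [LinearMap.range_zero, LinearMap.ker_id]
    · exact zero_gp
  obtain ⟨Q, f, g, hQpd, hf, hg, hfg⟩ := H M hdim
  obtain ⟨G', K', f', g', hG'proj, hf', hg', hf'g', hK'pd⟩ := hQpd
  have hK'proj : Module.Projective R K' := hK'pd
  -- Y = preimage of (range f) in G'
  let Ysub : Submodule R G' := Submodule.comap g' (LinearMap.range f)
  let Y := ModuleCat.of R Ysub
  have hmemj : ∀ k : K', f' k ∈ Ysub := by
    intro k
    have h0 : g' (f' k) = 0 := by
      have : f' k ∈ LinearMap.ker g' := hf'g' ▸ LinearMap.mem_range_self _ k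
      exact this
    show g' (f' k) ∈ LinearMap.range f
    rw [h0]
    exact zero_mem _
  let j' : K' →ₗ[R] Y := LinearMap.codRestrict Ysub f' hmemj
  have hj' : Function.Injective j' := fun a b hab => hf' (congrArg Subtype.val hab)
  have hmemY : ∀ y : Y, g' (Ysub.subtype y) ∈ LinearMap.range f := fun y => y.2
  let gY : Y →ₗ[R] M := factorInj f hf (g' ∘ₗ Ysub.subtype) hmemY
  have hgYap : ∀ y : Y, f (gY y) = g' (Ysub.subtype y) := fun y => factorInj_apply _ _ _ _ y
  have hgY : Function.Surjective gY := by
    intro m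
    obtain ⟨b, hb⟩ := hg' (f m)
    have hbY : b ∈ Ysub := by
      show g' b ∈ LinearMap.range f
      rw [hb]
      exact LinearMap.mem_range_self _ m
    refine ⟨⟨b, hbY⟩, ?_⟩
    apply hf
    rw [hgYap]
    exact hb
  have hrangej' : LinearMap.range j' = LinearMap.ker gY := by
    apply le_antisymm
    · rintro _ ⟨k, rfl⟩
      rw [LinearMap.mem_ker]
      apply hf
      rw [hgYap, map_zero]
      show g' (f' k) = 0
      have : f' k ∈ LinearMap.ker g' := hf'g' ▸ LinearMap.mem_range_self _ k
      exact this
    · intro y hy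
      have h0 : g' (Ysub.subtype y) = 0 := by
        rw [← hgYap y, show gY y = 0 from hy, map_zero]
      have : Ysub.subtype y ∈ LinearMap.range f' := by rw [hf'g']; exact h0
      obtain ⟨k, hk⟩ := this
      exact ⟨k, Subtype.ext hk⟩
  obtain ⟨s₁, hs₁⟩ := gp_split M hMgp Y K' hK'proj j' gY hj' hgY hrangej'
  have hs₁ap : ∀ m, gY (s₁ m) = m := by
    intro m
    have := LinearMap.congr_fun hs₁ m
    simpa using this
  let ρY : Y →ₗ[R] Y := LinearMap.id - s₁ ∘ₗ gY
  have hρmem : ∀ y, ρY y ∈ LinearMap.range j' := by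
    intro y
    rw [hrangej']
    show gY (y - s₁ (gY y)) = 0
    rw [map_sub, hs₁ap, sub_self]
  let r₁ : Y →ₗ[R] K' := factorInj j' hj' ρY hρmem
  have hr₁ap : ∀ y, j' (r₁ y) = ρY y := fun y => factorInj_apply _ _ _ _ y
  have hr₁j' : ∀ k, r₁ (j' k) = k := by
    intro k
    apply hj'
    rw [hr₁ap]
    show j' k - s₁ (gY (j' k)) = j' k
    have h0 : gY (j' k) = 0 := by
      have : j' k ∈ LinearMap.ker gY := hrangej' ▸ LinearMap.mem_range_self _ k
      exact this
    rw [h0, map_zero, sub_zero]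
  -- extend r₁ to G'
  let π2 : G' →ₗ[R] M := g ∘ₗ g'
  have hπ2 : Function.Surjective π2 := by
    intro m
    obtain ⟨x, hx⟩ := hg m
    obtain ⟨b, hb⟩ := hg' x
    exact ⟨b, by show g (g' b) = m; rw [hb, hx]⟩
  have hexact2 : LinearMap.range Ysub.subtype = LinearMap.ker π2 := by
    rw [Submodule.range_subtype]
    ext x
    show g' x ∈ LinearMap.range f ↔ g (g' x) = 0
    rw [hfg]
    exact Iff.rfl
  obtain ⟨r, hr⟩ := gp_extmap M hMgp Y G' Ysub.subtype π2 (Submodule.injective_subtype _)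
    hπ2 hexact2 K' hK'proj r₁
  have hrap : ∀ y : Y, r (Ysub.subtype y) = r₁ y := by
    intro y
    have := LinearMap.congr_fun hr y
    exact this
  have hrf' : ∀ k, r (f' k) = k := by
    intro k
    have h1 : r (Ysub.subtype (j' k)) = r₁ (j' k) := hrap (j' k)
    rw [hr₁j'] at h1
    exact h1
  -- split g'
  let θ : G' →ₗ[R] G' := LinearMap.id - f' ∘ₗ r
  have hθker : LinearMap.ker g' ≤ LinearMap.ker θ := by
    intro x hx
    have : x ∈ LinearMap.range f' := by rw [hf'g']; exact hx
    obtain ⟨k, rfl⟩ := this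
    show f' k - f' (r (f' k)) = 0
    rw [hrf', sub_self]
  let sQ : Q →ₗ[R] G' := factorSurj g' hg' θ hθker
  have hsQap : ∀ b, sQ (g' b) = θ b := factorSurj_apply g' hg' θ hθker
  have hg'sQ : g' ∘ₗ sQ = LinearMap.id := by
    apply LinearMap.ext
    intro x
    obtain ⟨b, rfl⟩ := hg' x
    show g' (sQ (g' b)) = g' b
    rw [hsQap]
    show g' (b - f' (r b)) = g' b
    have h0 : g' (f' (r b)) = 0 := by
      have : f' (r b) ∈ LinearMap.ker g' := hf'g' ▸ LinearMap.mem_range_self _ _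
      exact this
    rw [map_sub, h0, sub_zero]
  haveI := hG'proj
  have hQproj : Module.Projective R Q := Module.Projective.of_split sQ g' hg'sQ
  -- SGP structure
  let fQ : Q →ₗ[R] Q := f ∘ₗ g
  have hrk : LinearMap.range fQ = LinearMap.ker fQ := by
    have h1 : LinearMap.range fQ = LinearMap.range f := by
      rw [show fQ = f ∘ₗ g from rfl, LinearMap.range_comp, LinearMap.range_eq_top.2 hg,
        Submodule.map_top]
    have h2 : LinearMap.ker fQ = LinearMap.ker g := by
      rw [show fQ = f ∘ₗ g from rfl, LinearMap.ker_comp, LinearMap.ker_eq_bot.2 hf,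
        Submodule.comap_bot]
    rw [h1, h2, hfg]
  have hrangefQ : LinearMap.range f = LinearMap.range fQ := by
    rw [show fQ = f ∘ₗ g from rfl, LinearMap.range_comp, LinearMap.range_eq_top.2 hg,
      Submodule.map_top]
  refine ⟨Q, fQ, hQproj, hrk, ⟨(LinearEquiv.ofInjective f hf).trans
    (LinearEquiv.ofEq _ _ hrangefQ)⟩, ?_⟩
  intro Q' hQ' t ht
  have htker : LinearMap.ker g ≤ LinearMap.ker t := by
    intro x hx
    have : x ∈ LinearMap.range f := by rw [hfg]; exact hx
    obtain ⟨m, rfl⟩ := this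
    obtain ⟨b, rfl⟩ := hg m
    have := LinearMap.congr_fun ht b
    simpa [fQ] using this
  let tbar : M →ₗ[R] Q' := factorSurj g hg t htker
  have htbarap : ∀ x, tbar (g x) = t x := factorSurj_apply g hg t htker
  obtain ⟨h, hh⟩ := gp_extmap M hMgp M Q f g hf hg hfg Q' hQ' tbar
  have hhap : ∀ m, h (f m) = tbar m := by
    intro m
    have := LinearMap.congr_fun hh m
    simpa using this
  refine ⟨h, ?_⟩
  apply LinearMap.ext
  intro x
  show h (f (g x)) = t x
  rw [hhap, htbarap]

/-- Theorem 2.1: every Gorenstein projective `R`-module is strongly Gorenstein projective iff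
every module of Gorenstein projective dimension `≤ 1` fits in a short exact sequence
`0 → M → Q → M → 0` with `pd Q ≤ 1`. -/
theorem forall_gorensteinProjective_stronglyGorensteinProjective_iff
    (R : Type u) [CommRing R] :
    (∀ M : ModuleCat.{v} R,
        IsGorensteinProjective R M → IsStronglyGorensteinProjective R M) ↔
    (∀ M : ModuleCat.{v} R, GorensteinProjDimLE R 1 M →
        ∃ (Q : ModuleCat.{v} R) (f : M →ₗ[R] Q) (g : Q →ₗ[R] M),
          ProjDimLE R 1 Q ∧ Function.Injective f ∧ Function.Surjective g ∧
          LinearMap.range f = LinearMap.ker g) := by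
  constructor
  · intro H M hM
    exact main_forward H M hM
  · intro H M hMgp
    exact main_backward H M hMgp
end

section
/- Let D be a principal ideal domain and let 𝒫 be a nonzero prime ideal of D. Then every Gorenstein projective module over the quotient ring R = D/𝒫² is strongly Gorenstein projective. -/
universe u v

section SGPAux

open LinearMap

variable {R : Type u} [CommRing R]

open Classical in
noncomputable def divChoose (π : R) (r : R) : R :=
  if _h0 : r = 0 then 0 else if h : ∃ y, r = π * y then h.choose else 0

lemma divChoose_zero (π : R) : divChoose π 0 = 0 := by simp [divChoose]

lemma divChoose_spec {π r : R} (h : ∃ y, r = π * y) : r = π * divChoose π r := by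
  by_cases h0 : r = 0
  · simp [divChoose, h0]
  · rw [divChoose, dif_neg h0, dif_pos h]
    exact h.choose_spec

lemma finsupp_div {J : Type v} {π : R}
    (hann : ∀ x : R, π * x = 0 → ∃ y, x = π * y)
    (z : J →₀ R) (hz : π • z = 0) : ∃ w : J →₀ R, z = π • w := by
  refine ⟨z.mapRange (divChoose π) (divChoose_zero π), ?_⟩
  ext j
  have h1 : π * z j = 0 := by
    have h2 := DFunLike.congr_fun hz j
    simpa using h2
  rw [Finsupp.smul_apply, Finsupp.mapRange_apply, smul_eq_mul]
  exact divChoose_spec (hann _ h1)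

lemma projective_div {Q : Type*} [AddCommGroup Q] [Module R Q]
    (hQ : Module.Projective R Q) {π : R}
    (hann : ∀ x : R, π * x = 0 → ∃ y, x = π * y)
    (q : Q) (hq : π • q = 0) : ∃ q' : Q, q = π • q' := by
  obtain ⟨s, hs⟩ := Module.projective_def'.mp hQ
  have h1 : π • s q = 0 := by rw [← map_smul, hq, map_zero]
  obtain ⟨w, hw⟩ := finsupp_div hann (s q) h1
  refine ⟨Finsupp.linearCombination R id w, ?_⟩
  have h2 : Finsupp.linearCombination R id (s q) = q := by
    have h3 := congrArg (fun (t : Q →ₗ[R] Q) => t q) hs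
    simpa using h3
  rw [← h2, hw, map_smul]

end SGPAux

section SGPAux2

open LinearMap

theorem lift_conj {R : Type*} [CommRing R] {F F' Q : Type*} [AddCommGroup F] [Module R F]
    [AddCommGroup F'] [Module R F'] [AddCommGroup Q] [Module R Q]
    (e : F ≃ₗ[R] F') (f : F →ₗ[R] F)
    (H : ∀ g : F →ₗ[R] Q, g ∘ₗ f = 0 → ∃ h : F →ₗ[R] Q, h ∘ₗ f = g)
    (g : F' →ₗ[R] Q) (hg : g ∘ₗ ((e.toLinearMap ∘ₗ f) ∘ₗ e.symm.toLinearMap) = 0) :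
    ∃ h : F' →ₗ[R] Q, h ∘ₗ ((e.toLinearMap ∘ₗ f) ∘ₗ e.symm.toLinearMap) = g := by
  have hg0 : (g ∘ₗ e.toLinearMap) ∘ₗ f = 0 := by
    ext t
    have h1 := DFunLike.congr_fun hg (e t)
    simp only [LinearMap.comp_apply, LinearMap.coe_comp, Function.comp_apply,
      LinearEquiv.coe_coe, LinearMap.zero_apply, LinearEquiv.symm_apply_apply,
      LinearEquiv.apply_symm_apply] at h1 ⊢
    exact h1
  obtain ⟨h0, hh0⟩ := H (g ∘ₗ e.toLinearMap) hg0
  refine ⟨h0 ∘ₗ e.symm.toLinearMap, ?_⟩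
  ext x
  have h2 := DFunLike.congr_fun hh0 (e.symm x)
  simp only [LinearMap.comp_apply, LinearMap.coe_comp, Function.comp_apply,
    LinearEquiv.coe_coe, LinearMap.zero_apply, LinearEquiv.symm_apply_apply,
    LinearEquiv.apply_symm_apply] at h2 ⊢
  exact h2

lemma sgp_of_subsingleton {R : Type u} [CommRing R] (M : ModuleCat.{v} R)
    (h : Subsingleton M) : IsStronglyGorensteinProjective R M := by
  refine ⟨M, 0, ?_, ?_, ⟨?_⟩, ?_⟩
  · exact Module.projective_def'.mpr ⟨0, by ext x; exact Subsingleton.elim _ _⟩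
  · apply Submodule.ext; intro x
    have hx : x = 0 := Subsingleton.elim _ _
    subst hx
    simp
  · exact LinearEquiv.ofLinear 0 0 (by ext x; exact Subsingleton.elim _ _)
      (by ext x; exact Subsingleton.elim _ _)
  · intro Q _ g _
    exact ⟨0, by ext x; have hx : x = 0 := Subsingleton.elim _ _; simp [hx]⟩

theorem isSGP_of_data {R : Type u} [CommRing R] (M : ModuleCat.{v} R)
    {F : Type*} [AddCommGroup F] [Module R F] [Small.{v} F] [Module.Free R F]
    (f : F →ₗ[R] F)
    (hrk : LinearMap.range f = LinearMap.ker f)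
    (hme : Nonempty (M ≃ₗ[R] ↥(LinearMap.range f)))
    (hlift : ∀ (Q : Type v) [AddCommGroup Q] [Module R Q], Module.Projective R Q →
      ∀ g : F →ₗ[R] Q, g ∘ₗ f = 0 → ∃ h : F →ₗ[R] Q, h ∘ₗ f = g) :
    IsStronglyGorensteinProjective R M := by
  let e : F ≃ₗ[R] Shrink.{v} F := (Shrink.linearEquiv R F).symm
  haveI : Module.Free R (Shrink.{v} F) := Module.Free.of_equiv e
  let f' : Shrink.{v} F →ₗ[R] Shrink.{v} F := (e.toLinearMap ∘ₗ f) ∘ₗ e.symm.toLinearMap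
  have hker' : ∀ x, (x ∈ LinearMap.ker f' ↔ e.symm x ∈ LinearMap.ker f) := by
    intro x
    simp [f', LinearMap.mem_ker]
  have hrange' : ∀ x, (x ∈ LinearMap.range f' ↔ e.symm x ∈ LinearMap.range f) := by
    intro x; constructor
    · rintro ⟨y, rfl⟩; exact ⟨e.symm y, by simp [f']⟩
    · rintro ⟨y, hy⟩; exact ⟨e y, by simp [f', hy]⟩
  have hmapeq : (LinearMap.range f).map (e : F →ₗ[R] Shrink.{v} F) = LinearMap.range f' := by
    ext x; rw [Submodule.mem_map]; constructor
    · rintro ⟨y, hy, rfl⟩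
      refine (hrange' _).mpr ?_
      simpa using hy
    · intro hx; exact ⟨e.symm x, (hrange' x).mp hx, by simp⟩
  refine ⟨ModuleCat.of R (Shrink.{v} F), f', inferInstanceAs (Module.Projective R (Shrink.{v} F)), ?_, ?_, ?_⟩
  · exact Submodule.ext fun x => (hrange' x).trans (hrk ▸ (hker' x).symm)
  · obtain ⟨e0⟩ := hme
    exact ⟨e0.trans ((e.submoduleMap (LinearMap.range f)).trans (LinearEquiv.ofEq _ _ hmapeq))⟩
  · intro Q hQ g hg
    exact lift_conj e f (fun g' hg' => hlift Q hQ g' hg') g hg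

end SGPAux2

section SGPAux3

open LinearMap

variable {R : Type u} [CommRing R]

lemma sgp_isUnit_of_not_mem {π : R} (hsq : π * π = 0)
    (hmax : (Ideal.span {π}).IsMaximal) {x : R} (hx : x ∉ Ideal.span {π}) : IsUnit x := by
  obtain ⟨y, i, hi, h1⟩ := hmax.exists_inv hx
  obtain ⟨c, hc⟩ := Ideal.mem_span_singleton'.mp hi
  refine IsUnit.of_mul_eq_one (a := x) (y * (1 + c * π)) ?_
  have h2 : y * x = 1 - c * π := by
    rw [← hc] at h1
    linear_combination h1
  have h3 : x * (y * (1 + c * π)) = 1 - c * c * (π * π) := by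
    rw [show x * (y * (1 + c * π)) = y * x * (1 + c * π) by ring, h2]; ring
  rw [h3, hsq]; ring

lemma sgp_ideal_cases {π : R} (hsq : π * π = 0) (hmax : (Ideal.span {π}).IsMaximal)
    (I : Ideal R) : I = ⊥ ∨ I = Ideal.span {π} ∨ I = ⊤ := by
  by_cases hle : I ≤ Ideal.span {π}
  · by_cases hb : I = ⊥
    · exact Or.inl hb
    · refine Or.inr (Or.inl (le_antisymm hle ?_))
      obtain ⟨y, hyI, hy0⟩ := (Submodule.ne_bot_iff I).mp hb
      obtain ⟨c, hc⟩ := Ideal.mem_span_singleton'.mp (hle hyI)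
      have hcu : IsUnit c := by
        apply sgp_isUnit_of_not_mem hsq hmax
        intro hcin
        obtain ⟨d, hd⟩ := Ideal.mem_span_singleton'.mp hcin
        exact hy0 (by rw [← hc, ← hd, mul_assoc, hsq, mul_zero])
      obtain ⟨u, hu⟩ := hcu
      have hπI : π ∈ I := by
        have h4 : π = ↑u⁻¹ * y := by
          rw [← hc, ← hu, ← mul_assoc, Units.inv_mul, one_mul]
        rw [h4]
        exact I.mul_mem_left _ hyI
      rwa [Ideal.span_singleton_le_iff_mem]
  · obtain ⟨x, hxI, hxn⟩ := SetLike.not_le_iff_exists.mp hle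
    exact Or.inr (Or.inr (I.eq_top_of_isUnit_mem hxI (sgp_isUnit_of_not_mem hsq hmax hxn)))

lemma sgp_small_ring {π : R} (hsq : π * π = 0)
    (hann : ∀ x : R, π * x = 0 → ∃ y, x = π * y)
    (hmax : (Ideal.span {π}).IsMaximal)
    (M : Type v) [AddCommGroup M] [Module R M] [Nontrivial M] : Small.{v} R := by
  classical
  obtain ⟨m, hm⟩ := exists_ne (0 : M)
  set ρ := LinearMap.toSpanSingleton R M m with hρ
  have hkerne : LinearMap.ker ρ ≠ ⊤ := by
    intro h
    apply hm
    have h1 : (1 : R) ∈ LinearMap.ker ρ := by rw [h]; trivial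
    simpa [hρ, LinearMap.toSpanSingleton_apply_one] using h1
  rcases sgp_ideal_cases hsq hmax (LinearMap.ker ρ) with hk | hk | hk
  · exact small_of_injective (LinearMap.ker_eq_bot.mp hk)
  · have e1 : (R ⧸ Ideal.span {π}) ≃ₗ[R] LinearMap.range ρ := hk ▸ ρ.quotKerEquivRange
    haveI hsmallk : Small.{v} (R ⧸ Ideal.span {π}) := small_of_injective e1.injective
    set μ := LinearMap.toSpanSingleton R R π with hμ
    have hkerμ : LinearMap.ker μ = Ideal.span {π} := by
      ext x
      simp only [LinearMap.mem_ker, hμ, LinearMap.toSpanSingleton_apply, smul_eq_mul]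
      constructor
      · intro hx
        obtain ⟨y, hy⟩ := hann x (by rw [mul_comm]; exact hx)
        exact Ideal.mem_span_singleton'.mpr ⟨y, by rw [hy]; ring⟩
      · intro hx
        obtain ⟨c, hc⟩ := Ideal.mem_span_singleton'.mp hx
        rw [← hc, mul_assoc, hsq, mul_zero]
    have hrμ : Ideal.span {π} = (LinearMap.range μ : Submodule R R) :=
      LinearMap.span_singleton_eq_range R R π
    have e2 : (R ⧸ Ideal.span {π}) ≃ₗ[R] LinearMap.range μ := hkerμ ▸ μ.quotKerEquivRange
    haveI hsp : Small.{v} ↥(Ideal.span {π} : Ideal R) := by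
      rw [show (Ideal.span {π} : Ideal R) = (LinearMap.range μ : Submodule R R) from hrμ]
      exact small_of_injective e2.symm.injective
    choose sec hsec using Submodule.Quotient.mk_surjective (Ideal.span {π} : Submodule R R)
    let Φ : R → (R ⧸ (Ideal.span {π} : Submodule R R)) × ↥(Ideal.span {π} : Ideal R) :=
      fun r => (Submodule.Quotient.mk r,
        ⟨r - sec (Submodule.Quotient.mk r), by
          have h3 := (Submodule.Quotient.eq _).mp (hsec (Submodule.Quotient.mk r))
          simpa [neg_sub] using (Ideal.span {π} : Submodule R R).neg_mem h3⟩)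
    have hinj : Function.Injective Φ := by
      intro a b hab
      have h1 : (Submodule.Quotient.mk a : R ⧸ (Ideal.span {π} : Submodule R R)) =
          Submodule.Quotient.mk b := congrArg Prod.fst hab
      have h2 : a - sec (Submodule.Quotient.mk a) = b - sec (Submodule.Quotient.mk b) :=
        congrArg (fun t => (t.2 : R)) hab
      rw [h1] at h2
      exact by linear_combination h2
    exact small_of_injective hinj
  · exact absurd hk hkerne

end SGPAux3

section SGPAux4

open LinearMap

/-- Turn an `R`-submodule of a module killed by an ideal `I` into an `R⧸I`-submodule. -/
def toKSub {R : Type u} [CommRing R] {I : Ideal R} {V : Type v} [AddCommGroup V] [Module R V]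
    (htor : Module.IsTorsionBySet R V I) (p : Submodule R V) :
    @Submodule (R ⧸ I) V _ _ (htor.module) :=
  letI := htor.module
  { carrier := p
    add_mem' := fun ha hb => p.add_mem ha hb
    zero_mem' := p.zero_mem
    smul_mem' := by
      intro c v hv
      obtain ⟨r, rfl⟩ := Ideal.Quotient.mk_surjective c
      have h1 : (Ideal.Quotient.mk I r) • v = r • v := htor.mk_smul r v
      rw [h1]
      exact p.smul_mem r hv }

set_option maxHeartbeats 1000000 in
theorem sgp_all {R : Type u} [CommRing R] (π : R) (hsq : π * π = 0)
    (hann : ∀ x : R, π * x = 0 ↔ ∃ y, x = π * y)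
    (hmax : (Ideal.span {π}).IsMaximal)
    (M : ModuleCat.{v} R) : IsStronglyGorensteinProjective R M := by
  classical
  by_cases hMs : Subsingleton M
  · exact sgp_of_subsingleton M hMs
  haveI : Nontrivial M := not_subsingleton_iff_nontrivial.mp hMs
  haveI hsmallR : Small.{v} R := sgp_small_ring hsq (fun x h => (hann x).mp h) hmax M
  set I : Ideal R := Ideal.span {π} with hI
  haveI := hmax
  letI kfield : Field (R ⧸ I) := Ideal.Quotient.field I
  set πM : Submodule R M := LinearMap.range (LinearMap.lsmul R M π) with hπM
  set N : Submodule R M := LinearMap.ker (LinearMap.lsmul R M π) with hN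
  have htor : Module.IsTorsionBySet R (M ⧸ πM) I := by
    rw [hI]
    refine (Module.isTorsionBySet_span_singleton_iff π).mpr ?_
    intro x
    obtain ⟨m, rfl⟩ := Submodule.Quotient.mk_surjective πM x
    rw [← Submodule.Quotient.mk_smul]
    exact (Submodule.Quotient.mk_eq_zero πM).mpr ⟨m, rfl⟩
  letI : Module (R ⧸ I) (M ⧸ πM) := htor.module
  have hks : ∀ (r : R) (x : M ⧸ πM), (Ideal.Quotient.mk I r) • x = r • x :=
    fun r x => htor.mk_smul r x
  set q : M →ₗ[R] M ⧸ πM := πM.mkQ with hq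
  set S : Submodule (R ⧸ I) (M ⧸ πM) := toKSub htor (N.map q) with hS
  obtain ⟨C, hC⟩ := Submodule.exists_isCompl S
  set bJ := Module.Basis.ofVectorSpace (R ⧸ I) ↥S with hbJ
  set bI := Module.Basis.ofVectorSpace (R ⧸ I) ↥C with hbI
  set ι₁ := Module.Basis.ofVectorSpaceIndex (R ⧸ I) ↥C with hι₁
  set ι₂ := Module.Basis.ofVectorSpaceIndex (R ⧸ I) ↥S with hι₂
  have hv0 : ∀ i : ι₁, ∃ x : M, q x = ((bI i : ↥C) : M ⧸ πM) := fun i => πM.mkQ_surjective _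
  choose v hv using hv0
  have hw0 : ∀ j : ι₂, ∃ x : M, x ∈ N ∧ q x = ((bJ j : ↥S) : M ⧸ πM) := by
    intro j
    have hj : ((bJ j : ↥S) : M ⧸ πM) ∈ N.map q := (bJ j).2
    obtain ⟨x, hx, hx2⟩ := hj
    exact ⟨x, hx, hx2⟩
  choose w hwN hwq using hw0
  have hwN' : ∀ j, π • w j = 0 := by
    intro j
    have h1 := hwN j
    rw [hN, LinearMap.mem_ker, LinearMap.lsmul_apply] at h1
    exact h1
  set φ : (ι₁ →₀ R) × (ι₂ →₀ R) →ₗ[R] M :=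
    (Finsupp.linearCombination R v).coprod (Finsupp.linearCombination R w) with hφ
  set mkk : R →+* R ⧸ I := Ideal.Quotient.mk I with hmkk
  -- pushing linear combinations to the quotient
  have hq1 : ∀ (ι : Type v) (u : ι → M) (x : ι →₀ R),
      q (Finsupp.linearCombination R u x) =
        Finsupp.linearCombination (R ⧸ I) (fun i => q (u i))
          (x.mapRange mkk (map_zero mkk)) := by
    intro ι u x
    rw [Finsupp.linearCombination_apply, Finsupp.linearCombination_apply,
      map_finsuppSum q, Finsupp.sum_mapRange_index (by simp)]
    apply Finsupp.sum_congr
    intro i _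
    rw [map_smul, hks]
  -- membership of combinations
  have hmemC : ∀ x : (ι₁ →₀ R),
      Finsupp.linearCombination (R ⧸ I) (fun i => q (v i))
        (x.mapRange mkk (map_zero mkk)) ∈ C := by
    intro x
    rw [Finsupp.linearCombination_apply]
    apply Submodule.sum_mem
    intro i _
    apply Submodule.smul_mem
    rw [hv i]
    exact (bI i).2
  have hmemS : ∀ z : (ι₂ →₀ R),
      Finsupp.linearCombination (R ⧸ I) (fun j => q (w j))
        (z.mapRange mkk (map_zero mkk)) ∈ S := by
    intro z
    rw [Finsupp.linearCombination_apply]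
    apply Submodule.sum_mem
    intro j _
    apply Submodule.smul_mem
    rw [hwq j]
    exact (bJ j).2
  have hbIind : LinearIndependent (R ⧸ I) (fun i : ι₁ => ((bI i : ↥C) : M ⧸ πM)) :=
    (bI.linearIndependent).map' C.subtype (Submodule.ker_subtype C)
  have hbJind : LinearIndependent (R ⧸ I) (fun j : ι₂ => ((bJ j : ↥S) : M ⧸ πM)) :=
    (bJ.linearIndependent).map' S.subtype (Submodule.ker_subtype S)
  -- vanishing of torsion combinations in the w family
  have hzero₂ : ∀ z : (ι₂ →₀ R), (∀ j, z j ∈ I) → Finsupp.linearCombination R w z = 0 := by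
    intro z hz
    rw [Finsupp.linearCombination_apply, Finsupp.sum]
    apply Finset.sum_eq_zero
    intro j _
    obtain ⟨c, hc⟩ := Ideal.mem_span_singleton'.mp (hz j)
    rw [← hc, mul_smul, hwN' j, smul_zero]

  have hfunv : (fun i : ι₁ => q (v i)) = (fun i : ι₁ => ((bI i : ↥C) : M ⧸ πM)) :=
    funext fun i => hv i
  have hfunw : (fun j : ι₂ => q (w j)) = (fun j : ι₂ => ((bJ j : ↥S) : M ⧸ πM)) :=
    funext fun j => hwq j
  have hcoefC : ∀ x : (ι₁ →₀ R),
      Finsupp.linearCombination (R ⧸ I) (fun i => q (v i))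
        (x.mapRange mkk (map_zero mkk)) = 0 → ∀ i, x i ∈ I := by
    intro x hx i
    rw [hfunv] at hx
    have h2 := linearIndependent_iff.mp hbIind _ hx
    have h3 : mkk (x i) = 0 := by
      have h4 := DFunLike.congr_fun h2 i
      simpa [Finsupp.mapRange_apply] using h4
    rw [hmkk] at h3
    rwa [← Ideal.Quotient.eq_zero_iff_mem]
  have hcoefS : ∀ z : (ι₂ →₀ R),
      Finsupp.linearCombination (R ⧸ I) (fun j => q (w j))
        (z.mapRange mkk (map_zero mkk)) = 0 → ∀ j, z j ∈ I := by
    intro z hz j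
    rw [hfunw] at hz
    have h2 := linearIndependent_iff.mp hbJind _ hz
    have h3 : mkk (z j) = 0 := by
      have h4 := DFunLike.congr_fun h2 j
      simpa [Finsupp.mapRange_apply] using h4
    rw [hmkk] at h3
    rwa [← Ideal.Quotient.eq_zero_iff_mem]
  -- the kernel characterization
  have hker_iff : ∀ x : (ι₁ →₀ R), ∀ z : (ι₂ →₀ R),
      (Finsupp.linearCombination R v x + Finsupp.linearCombination R w z = 0) ↔
        (x = 0 ∧ π • z = 0) := by
    intro x z
    constructor
    · intro h0
      -- map to the quotient
      have hq0 := congrArg q h0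
      rw [map_add, map_zero, hq1 ι₁ v x, hq1 ι₂ w z] at hq0
      set cEl := Finsupp.linearCombination (R ⧸ I) (fun i => q (v i))
        (x.mapRange mkk (map_zero mkk)) with hcEl
      set sEl := Finsupp.linearCombination (R ⧸ I) (fun j => q (w j))
        (z.mapRange mkk (map_zero mkk)) with hsEl
      have hcC : cEl ∈ C := hmemC x
      have hsS : sEl ∈ S := hmemS z
      have hc0 : cEl = 0 := by
        have h5 : cEl ∈ S := by
          have h6 : cEl = -sEl := eq_neg_of_add_eq_zero_left hq0
          rw [h6]
          exact S.neg_mem hsS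
        exact Submodule.disjoint_def.mp hC.disjoint cEl h5 hcC
      have hs0 : sEl = 0 := by
        rw [hc0, zero_add] at hq0
        exact hq0
      have hxI : ∀ i, x i ∈ I := hcoefC x hc0
      have hzI : ∀ j, z j ∈ I := hcoefS z hs0
      have hπz : π • z = 0 := by
        ext j
        obtain ⟨c, hc⟩ := Ideal.mem_span_singleton'.mp (hzI j)
        rw [Finsupp.smul_apply, smul_eq_mul, ← hc]
        rw [show π * (c * π) = c * (π * π) by ring, hsq, mul_zero]
        simp
      refine ⟨?_, hπz⟩
      -- second pass : x itself is zero
      have hlcz : Finsupp.linearCombination R w z = 0 := hzero₂ z hzI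
      have hlcx : Finsupp.linearCombination R v x = 0 := by
        have := h0
        rw [hlcz, add_zero] at this
        exact this
      set a : ι₁ →₀ R := x.mapRange (divChoose π) (divChoose_zero π) with ha
      have hxdiv : ∀ i, x i = π * divChoose π (x i) := by
        intro i
        obtain ⟨c, hc⟩ := Ideal.mem_span_singleton'.mp (hxI i)
        exact divChoose_spec ⟨c, by rw [← hc]; ring⟩
      have hlcxa : Finsupp.linearCombination R v x =
          π • Finsupp.linearCombination R v a := by
        rw [ha, Finsupp.linearCombination_apply, Finsupp.linearCombination_apply,
          Finsupp.smul_sum, Finsupp.sum_mapRange_index (by simp)]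
        apply Finsupp.sum_congr
        intro i _
        rw [smul_smul, ← hxdiv i]
      have h7 : Finsupp.linearCombination R v a ∈ N := by
        rw [hN, LinearMap.mem_ker, LinearMap.lsmul_apply, ← hlcxa]
        exact hlcx
      have h8' : q (Finsupp.linearCombination R v a) ∈ Submodule.map q N :=
        Submodule.mem_map.mpr ⟨_, h7, rfl⟩
      have h8 : q (Finsupp.linearCombination R v a) ∈ S := h8'
      have h9 : q (Finsupp.linearCombination R v a) = 0 := by
        have h10 : q (Finsupp.linearCombination R v a) ∈ C := by
          rw [hq1 ι₁ v a]
          exact hmemC a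
        exact Submodule.disjoint_def.mp hC.disjoint _ h8 h10
      have haI : ∀ i, a i ∈ I := by
        apply hcoefC a
        rw [← hq1 ι₁ v a]
        exact h9
      ext i
      obtain ⟨c, hc⟩ := Ideal.mem_span_singleton'.mp (haI i)
      have h11 : a i = divChoose π (x i) := by rw [ha, Finsupp.mapRange_apply]
      rw [show x i = π * divChoose π (x i) from hxdiv i, ← h11, ← hc]
      rw [show π * (c * π) = c * (π * π) by ring, hsq, mul_zero]
      simp
    · rintro ⟨hx, hz⟩
      have hzI : ∀ j, z j ∈ I := by
        intro j
        have h1 : π * z j = 0 := by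
          have h2 := DFunLike.congr_fun hz j
          simpa using h2
        obtain ⟨y, hy⟩ := (hann _).mp h1
        exact Ideal.mem_span_singleton'.mpr ⟨y, by rw [hy]; ring⟩
      rw [hx, map_zero, zero_add]
      exact hzero₂ z hzI
  -- surjectivity of φ
  set X : Submodule R M := LinearMap.range φ with hX
  have hvX : ∀ i, v i ∈ X := by
    intro i
    refine ⟨(Finsupp.single i 1, 0), ?_⟩
    rw [hφ]
    simp [LinearMap.coprod_apply, Finsupp.linearCombination_single]
  have hwX : ∀ j, w j ∈ X := by
    intro j
    refine ⟨(0, Finsupp.single j 1), ?_⟩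
    rw [hφ]
    simp [LinearMap.coprod_apply, Finsupp.linearCombination_single]
  have hSle : S ≤ toKSub htor (X.map q) := by
    have h1 := congrArg (Submodule.map S.subtype) bJ.span_eq
    rw [Submodule.map_span, Submodule.map_top, Submodule.range_subtype] at h1
    rw [← h1, Submodule.span_le]
    rintro _ ⟨_, ⟨j, rfl⟩, rfl⟩
    show ((bJ j : ↥S) : M ⧸ πM) ∈ X.map q
    rw [← hwq j]
    exact Submodule.mem_map.mpr ⟨_, hwX j, rfl⟩
  have hCle : C ≤ toKSub htor (X.map q) := by
    have h1 := congrArg (Submodule.map C.subtype) bI.span_eq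
    rw [Submodule.map_span, Submodule.map_top, Submodule.range_subtype] at h1
    rw [← h1, Submodule.span_le]
    rintro _ ⟨_, ⟨i, rfl⟩, rfl⟩
    show ((bI i : ↥C) : M ⧸ πM) ∈ X.map q
    rw [← hv i]
    exact Submodule.mem_map.mpr ⟨_, hvX i, rfl⟩
  have hsub : ∀ m : M, ∃ x ∈ X, m - x ∈ πM := by
    intro m
    have h2 : q m ∈ S ⊔ C := by
      rw [hC.sup_eq_top]
      trivial
    obtain ⟨y, hy, zz, hz, hyz⟩ := Submodule.mem_sup.mp h2
    have h3 : q m ∈ toKSub htor (X.map q) := by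
      rw [← hyz]
      exact Submodule.add_mem _ (hSle hy) (hCle hz)
    have h4 : q m ∈ X.map q := h3
    obtain ⟨x, hx, hqx⟩ := h4
    refine ⟨x, hx, ?_⟩
    have h5 : x - m ∈ πM := (Submodule.Quotient.eq πM).mp hqx
    have h6 := πM.neg_mem h5
    rwa [neg_sub] at h6
  have hπmem : ∀ m : M, π • m ∈ X := by
    intro m
    obtain ⟨x, hx, hmx⟩ := hsub m
    obtain ⟨u, hu⟩ := hmx
    rw [LinearMap.lsmul_apply] at hu
    have h3 : π • m = π • x + π • (π • u) := by
      rw [hu, smul_sub]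
      abel
    rw [h3, smul_smul, hsq, zero_smul, add_zero]
    exact X.smul_mem π hx
  have hsurj : Function.Surjective φ := by
    intro m
    suffices h : m ∈ X by exact h
    obtain ⟨x, hx, hmx⟩ := hsub m
    obtain ⟨u, hu⟩ := hmx
    rw [LinearMap.lsmul_apply] at hu
    have h4 : m = x + π • u := by rw [hu]; abel
    rw [h4]
    exact X.add_mem hx (hπmem u)
  -- the maps ψ and f
  set ψ : (ι₁ →₀ R) × (ι₂ →₀ R) →ₗ[R] (ι₁ →₀ R) × (ι₁ →₀ R) × (ι₂ →₀ R) :=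
    (LinearMap.fst R (ι₁ →₀ R) (ι₂ →₀ R)).prod ((0 : (ι₁ →₀ R) × (ι₂ →₀ R) →ₗ[R] (ι₁ →₀ R)).prod
      (π • LinearMap.snd R (ι₁ →₀ R) (ι₂ →₀ R))) with hψ
  set f : (ι₁ →₀ R) × (ι₁ →₀ R) × (ι₂ →₀ R) →ₗ[R] (ι₁ →₀ R) × (ι₁ →₀ R) × (ι₂ →₀ R) :=
    ((LinearMap.fst R (ι₁ →₀ R) (ι₂ →₀ R)).comp (LinearMap.snd R (ι₁ →₀ R) ((ι₁ →₀ R) × (ι₂ →₀ R)))).prod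
      ((0 : (ι₁ →₀ R) × (ι₁ →₀ R) × (ι₂ →₀ R) →ₗ[R] (ι₁ →₀ R)).prod
        (π • ((LinearMap.snd R (ι₁ →₀ R) (ι₂ →₀ R)).comp (LinearMap.snd R (ι₁ →₀ R) ((ι₁ →₀ R) × (ι₂ →₀ R)))))) with hf
  have hψ_apply : ∀ p : (ι₁ →₀ R) × (ι₂ →₀ R), ψ p = (p.1, 0, π • p.2) := by
    intro p
    rw [hψ]
    rfl
  have hf_apply : ∀ t : (ι₁ →₀ R) × (ι₁ →₀ R) × (ι₂ →₀ R), f t = (t.2.1, 0, π • t.2.2) := by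
    intro t
    rw [hf]
    rfl
  have hφ_apply : ∀ p : (ι₁ →₀ R) × (ι₂ →₀ R),
      φ p = Finsupp.linearCombination R v p.1 + Finsupp.linearCombination R w p.2 := by
    intro p
    rw [hφ]
    rfl
  have hkk : LinearMap.ker φ = LinearMap.ker ψ := by
    ext p
    obtain ⟨x, z⟩ := p
    rw [LinearMap.mem_ker, LinearMap.mem_ker, hψ_apply, hφ_apply]
    constructor
    · intro h0
      obtain ⟨hx, hz⟩ := (hker_iff x z).mp h0
      rw [hx, hz]
      rfl
    · intro h0
      have h1 : x = 0 ∧ ((0 : (ι₁ →₀ R)) = 0 ∧ π • z = 0) := by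
        rw [Prod.ext_iff, Prod.ext_iff] at h0
        exact ⟨h0.1, h0.2.1, h0.2.2⟩
      exact (hker_iff x z).mpr ⟨h1.1, h1.2.2⟩
  have hrr : LinearMap.range ψ = LinearMap.range f := by
    ext t
    constructor
    · rintro ⟨⟨x, z⟩, rfl⟩
      refine ⟨(0, x, z), ?_⟩
      rw [hf_apply, hψ_apply]
    · rintro ⟨⟨x, y, z⟩, rfl⟩
      refine ⟨(y, z), ?_⟩
      rw [hf_apply, hψ_apply]
  have hrk : LinearMap.range f = LinearMap.ker f := by
    ext t
    constructor
    · rintro ⟨⟨x, y, z⟩, rfl⟩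
      rw [LinearMap.mem_ker, hf_apply, hf_apply]
      show ((0 : (ι₁ →₀ R)), (0 : (ι₁ →₀ R)), π • π • z) = 0
      rw [smul_smul, hsq, zero_smul]
      rfl
    · intro ht
      rw [LinearMap.mem_ker, hf_apply] at ht
      obtain ⟨a, b, c⟩ := t
      have h1 : b = 0 ∧ π • c = 0 := by
        rw [Prod.ext_iff, Prod.ext_iff] at ht
        exact ⟨ht.1, ht.2.2⟩
      obtain ⟨z', hz'⟩ := finsupp_div (fun x h => (hann x).mp h) c h1.2
      refine ⟨(0, a, z'), ?_⟩
      rw [hf_apply, h1.1, hz']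
  -- the equivalence M ≃ range f
  have hequiv : Nonempty (M ≃ₗ[R] ↥(LinearMap.range f)) := by
    refine ⟨((φ.quotKerEquivOfSurjective hsurj).symm.trans
      ((Submodule.quotEquivOfEq _ _ hkk).trans
        ((ψ.quotKerEquivRange).trans (LinearEquiv.ofEq _ _ hrr))))⟩
  -- the lifting property
  have hlift : ∀ (Q : Type v) [AddCommGroup Q] [Module R Q], Module.Projective R Q →
      ∀ g : (ι₁ →₀ R) × (ι₁ →₀ R) × (ι₂ →₀ R) →ₗ[R] Q, g ∘ₗ f = 0 → ∃ h, h ∘ₗ f = g := by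
    intro Q _ _ hQ g hg
    have hg1 : ∀ y : (ι₁ →₀ R), g (y, 0, 0) = 0 := by
      intro y
      have h1 := DFunLike.congr_fun hg (0, y, 0)
      rw [LinearMap.comp_apply, hf_apply] at h1
      simpa using h1
    have hg3 : ∀ z : (ι₂ →₀ R), g (0, 0, π • z) = 0 := by
      intro z
      have h1 := DFunLike.congr_fun hg (0, 0, z)
      rw [LinearMap.comp_apply, hf_apply] at h1
      simpa using h1
    have hgsingle : ∀ j : ι₂, π • g (0, 0, Finsupp.single j 1) = 0 := by
      intro j
      rw [← map_smul]
      have h1 : π • ((0, 0, Finsupp.single j 1) : (ι₁ →₀ R) × (ι₁ →₀ R) × (ι₂ →₀ R)) =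
          ((0 : (ι₁ →₀ R)), (0 : (ι₁ →₀ R)), π • Finsupp.single j 1) := by
        simp [Finsupp.smul_single]
      rw [h1]
      exact hg3 _
    choose uQ huQ using fun j => projective_div hQ (fun x h => (hann x).mp h) _ (hgsingle j)
    set h3 : (ι₂ →₀ R) →ₗ[R] Q := Finsupp.linearCombination R uQ with hh3
    have hπh3 : ∀ z : (ι₂ →₀ R), π • h3 z = g (0, 0, z) := by
      intro z
      have hmaps : (π • h3) = g ∘ₗ ((0 : (ι₂ →₀ R) →ₗ[R] (ι₁ →₀ R)).prod
          ((0 : (ι₂ →₀ R) →ₗ[R] (ι₁ →₀ R)).prod LinearMap.id)) := by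
        apply Finsupp.lhom_ext
        intro j r
        rw [LinearMap.smul_apply, hh3, Finsupp.linearCombination_single,
          LinearMap.comp_apply]
        simp only [LinearMap.prod_apply, Pi.prod, LinearMap.zero_apply, LinearMap.id_apply]
        rw [smul_comm π r, ← huQ j, ← map_smul]
        congr 1
        simp [Finsupp.smul_single]
      have h4 := DFunLike.congr_fun hmaps z
      rw [LinearMap.smul_apply] at h4
      rw [h4, LinearMap.comp_apply]
      rfl
    refine ⟨g ∘ₗ (((0 : (ι₁ →₀ R) →ₗ[R] (ι₁ →₀ R)).prod (LinearMap.id.prod 0)) ∘ₗ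
        LinearMap.fst R (ι₁ →₀ R) ((ι₁ →₀ R) × (ι₂ →₀ R))) +
      h3 ∘ₗ ((LinearMap.snd R (ι₁ →₀ R) (ι₂ →₀ R)) ∘ₗ (LinearMap.snd R (ι₁ →₀ R) ((ι₁ →₀ R) × (ι₂ →₀ R)))), ?_⟩
    apply LinearMap.ext
    rintro ⟨x, y, z⟩
    rw [LinearMap.comp_apply, hf_apply]
    simp only [LinearMap.add_apply, LinearMap.comp_apply, LinearMap.prod_apply,
      Pi.prod, LinearMap.fst_apply, LinearMap.snd_apply, LinearMap.id_apply,
      LinearMap.zero_apply]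
    rw [map_smul, hπh3 z]
    have hsplit : ((x, y, z) : (ι₁ →₀ R) × (ι₁ →₀ R) × (ι₂ →₀ R)) =
        (x, 0, 0) + ((0 : (ι₁ →₀ R)), y, (0 : (ι₂ →₀ R))) + ((0 : (ι₁ →₀ R)), (0 : (ι₁ →₀ R)), z) := by
      simp
    rw [hsplit, map_add, map_add, hg1 x, zero_add]
    rfl
  -- assemble
  haveI hsm2 : Small.{v} (ι₂ →₀ R) :=
    small_of_injective (f := fun g : ι₂ →₀ R => (g : ι₂ → R)) DFunLike.coe_injective
  haveI hsm1 : Small.{v} (ι₁ →₀ R) :=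
    small_of_injective (f := fun g : ι₁ →₀ R => (g : ι₁ → R)) DFunLike.coe_injective
  exact isSGP_of_data M f hrk hequiv hlift
end SGPAux4

/-- Example 2.2(1): over `D/P²`, `D` a PID and `P` a nonzero prime ideal, every Gorenstein
projective module is strongly Gorenstein projective. -/
theorem gorensteinProjective_eq_strongly_over_quotient_sq
    (D : Type u) [CommRing D] [IsDomain D] [IsPrincipalIdealRing D]
    (P : Ideal D) (hP : P.IsPrime) (hP0 : P ≠ ⊥) :
    ∀ M : ModuleCat.{v} (D ⧸ P ^ 2),
      IsGorensteinProjective (D ⧸ P ^ 2) M →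
        IsStronglyGorensteinProjective (D ⧸ P ^ 2) M := by
  intro M _
  obtain ⟨p, hp⟩ := (IsPrincipalIdealRing.principal P).principal
  rw [Ideal.submodule_span_eq] at hp
  have hp2 : P ^ 2 = Ideal.span {p * p} := by
    rw [hp, Ideal.span_singleton_pow, pow_two]
  have hpne : p ≠ 0 := by
    intro h
    apply hP0
    rw [hp, h, Ideal.span_singleton_eq_bot.mpr rfl]
  set π : D ⧸ P ^ 2 := Ideal.Quotient.mk (P ^ 2) p with hπ
  have hsq : π * π = 0 := by
    rw [hπ, ← map_mul, Ideal.Quotient.eq_zero_iff_mem, hp2]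
    exact Ideal.mem_span_singleton_self _
  have hann : ∀ x : D ⧸ P ^ 2, π * x = 0 ↔ ∃ y, x = π * y := by
    intro x
    obtain ⟨a, rfl⟩ := Ideal.Quotient.mk_surjective x
    constructor
    · intro h
      rw [hπ, ← map_mul, Ideal.Quotient.eq_zero_iff_mem, hp2,
        Ideal.mem_span_singleton'] at h
      obtain ⟨c, hc⟩ := h
      have h2 : p * (c * p) = p * a := by rw [← hc]; ring
      have h3 : c * p = a := mul_left_cancel₀ hpne h2
      refine ⟨Ideal.Quotient.mk _ c, ?_⟩
      rw [hπ, ← map_mul, show p * c = c * p from mul_comm p c, h3]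
    · rintro ⟨y, hy⟩
      obtain ⟨b, rfl⟩ := Ideal.Quotient.mk_surjective y
      rw [hy, hπ, ← map_mul, ← map_mul, Ideal.Quotient.eq_zero_iff_mem, hp2,
        Ideal.mem_span_singleton']
      exact ⟨b, by ring⟩
  haveI := hP
  have hPmax : P.IsMaximal := IsPrime.to_maximal_ideal hP0
  have hmax : (Ideal.span {π}).IsMaximal := by
    rw [Ideal.isMaximal_iff]
    constructor
    · intro h1
      obtain ⟨c, hc⟩ := Ideal.mem_span_singleton'.mp h1
      obtain ⟨c₀, rfl⟩ := Ideal.Quotient.mk_surjective c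
      rw [hπ, ← map_mul] at hc
      have h2 : c₀ * p - 1 ∈ P ^ 2 :=
        (Ideal.Quotient.eq).mp (hc.trans (map_one (Ideal.Quotient.mk (P ^ 2))).symm)
      have h4 : P ^ 2 ≤ P := Ideal.pow_le_self two_ne_zero
      have h5 : c₀ * p - 1 ∈ P := h4 h2
      have h6 : c₀ * p ∈ P := by
        rw [hp]
        exact Ideal.mem_span_singleton'.mpr ⟨c₀, rfl⟩
      have h7 := P.sub_mem h6 h5
      have h8 : (1 : D) ∈ P := by
        have h9 : c₀ * p - (c₀ * p - 1) = 1 := by ring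
        rwa [h9] at h7
      exact hP.ne_top ((Ideal.eq_top_iff_one P).mpr h8)
    · intro J x hle hxnotin hxJ
      obtain ⟨a, rfl⟩ := Ideal.Quotient.mk_surjective x
      have haP : a ∉ P := by
        intro haP
        apply hxnotin
        rw [hp] at haP
        obtain ⟨c, hc⟩ := Ideal.mem_span_singleton'.mp haP
        refine Ideal.mem_span_singleton'.mpr ⟨Ideal.Quotient.mk _ c, ?_⟩
        rw [hπ, ← map_mul, show c * p = a from hc]
      obtain ⟨y, i, hiP, hyi⟩ := hPmax.exists_inv haP
      have hiπ : Ideal.Quotient.mk (P ^ 2) i ∈ Ideal.span {π} := by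
        rw [hp] at hiP
        obtain ⟨c, hc⟩ := Ideal.mem_span_singleton'.mp hiP
        refine Ideal.mem_span_singleton'.mpr ⟨Ideal.Quotient.mk _ c, ?_⟩
        rw [hπ, ← map_mul, show c * p = i from hc]
      have h1 : (1 : D ⧸ P ^ 2) = Ideal.Quotient.mk _ y * Ideal.Quotient.mk _ a
          + Ideal.Quotient.mk _ i := by
        rw [← map_mul, ← map_add, hyi, map_one]
      rw [h1]
      exact J.add_mem (J.mul_mem_left _ hxJ) (hle hiπ)
  exact sgp_all π hsq hann hmax M
end

section
/- Let R₁, …, R_m be a finite family of commutative rings, each with finite Gorenstein global dimension. Then every Gorenstein projective module over the product ring R₁ × ⋯ × R_m is strongly Gorenstein projective if, and only if, for each i = 1, …, m every Gorenstein projective R_i-module is strongly Gorenstein projective. -/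
universe u v

namespace ProdGP
variable {m : ℕ} (R : Fin m → Type u) [∀ i, CommRing (R i)]

/-- The idempotent `e i` in the product ring. -/
def eIdem (i : Fin m) : ∀ j, R j := Pi.single i 1

variable {R}

lemma mul_eIdem (i : Fin m) (s : ∀ j, R j) : s * eIdem R i = Pi.single i (s i) := by
  funext j
  rcases eq_or_ne j i with rfl | h
  · simp [eIdem]
  · simp [eIdem, Pi.single_eq_of_ne h]

lemma eIdem_mul_single (i : Fin m) (r : R i) :
    eIdem R i * Pi.single i r = Pi.single i r := by
  rw [eIdem, ← Pi.single_mul, one_mul]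

lemma single_mul_eIdem (i : Fin m) (r : R i) :
    (Pi.single i r : ∀ j, R j) * eIdem R i = Pi.single i r := by
  rw [eIdem, ← Pi.single_mul, mul_one]

lemma eIdem_mul_eIdem (i : Fin m) : (eIdem R i * eIdem R i : ∀ j, R j) = eIdem R i :=
  eIdem_mul_single i 1

lemma eIdem_apply_self (i : Fin m) : eIdem R i i = 1 := Pi.single_eq_same i 1

variable (R) (i : Fin m)

section Comp
variable (N : Type*) [AddCommGroup N] [Module (∀ j, R j) N]

/-- The `i`-th component of a module over the product ring: `e i`-fixed points. -/
def comp : Submodule (∀ j, R j) N where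
  carrier := {x | eIdem R i • x = x}
  add_mem' {a b} ha hb := by
    show eIdem R i • (a + b) = a + b
    rw [smul_add]
    rw [show eIdem R i • a = a from ha, show eIdem R i • b = b from hb]
  zero_mem' := smul_zero _
  smul_mem' s x hx := by
    show eIdem R i • s • x = s • x
    rw [← mul_smul, mul_comm, mul_smul, show eIdem R i • x = x from hx]

variable {N}

lemma comp_mem_iff (x : N) : x ∈ comp R i N ↔ eIdem R i • x = x := Iff.rfl

lemma comp_spec (x : comp R i N) : eIdem R i • (x : N) = (x : N) := x.2

lemma eIdem_smul_mem (x : N) : eIdem R i • x ∈ comp R i N := by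
  rw [comp_mem_iff, ← mul_smul, eIdem_mul_eIdem]

lemma single_smul_mem (r : R i) (x : N) :
    (Pi.single i r : ∀ j, R j) • x ∈ comp R i N := by
  rw [comp_mem_iff, ← mul_smul, eIdem_mul_single]

instance : SMul (R i) (comp R i N) :=
  ⟨fun r x => ⟨(Pi.single i r : ∀ j, R j) • (x : N), single_smul_mem R i r x.1⟩⟩

@[simp] lemma comp_smul_coe (r : R i) (x : comp R i N) :
    ((r • x : comp R i N) : N) = (Pi.single i r : ∀ j, R j) • (x : N) := rfl

instance compModule : Module (R i) (comp R i N) where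
  one_smul x := Subtype.ext <| by rw [comp_smul_coe]; exact comp_spec R i x
  mul_smul r r' x := Subtype.ext <| by
    simp only [comp_smul_coe, ← mul_smul, ← Pi.single_mul]
  smul_zero r := Subtype.ext <| by simp
  smul_add r x y := Subtype.ext <| by
    simp only [comp_smul_coe, Submodule.coe_add, smul_add]
  add_smul r r' x := Subtype.ext <| by
    simp only [comp_smul_coe, Submodule.coe_add]
    rw [Pi.single_add, add_smul]
  zero_smul x := Subtype.ext <| by simp

/-- Restriction of an `S`-linear map to `i`-th components. -/
def compMap {N : Type*} {N' : Type*} [AddCommGroup N] [Module (∀ j, R j) N]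
    [AddCommGroup N'] [Module (∀ j, R j) N'] (f : N →ₗ[∀ j, R j] N') :
    comp R i N →ₗ[R i] comp R i N' where
  toFun x := ⟨f x, by rw [comp_mem_iff, ← map_smul, comp_spec]⟩
  map_add' x y := Subtype.ext <| by simp
  map_smul' r x := Subtype.ext <| by simp

@[simp] lemma compMap_coe {N : Type*} {N' : Type*} [AddCommGroup N] [Module (∀ j, R j) N]
    [AddCommGroup N'] [Module (∀ j, R j) N'] (f : N →ₗ[∀ j, R j] N') (x : comp R i N) :
    ((compMap R i f x : comp R i N') : N') = f (x : N) := rfl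

end Comp

section Proj

lemma compMap_surjective {N : Type*} {N' : Type*} [AddCommGroup N] [Module (∀ j, R j) N]
    [AddCommGroup N'] [Module (∀ j, R j) N'] (f : N →ₗ[∀ j, R j] N')
    (hf : Function.Surjective f) : Function.Surjective (compMap R i f) := by
  rintro ⟨y, hy⟩
  obtain ⟨x, rfl⟩ := hf y
  refine ⟨⟨eIdem R i • x, eIdem_smul_mem R i x⟩, Subtype.ext ?_⟩
  rw [compMap_coe, map_smul]
  exact hy

lemma single_smul_eq {B : Type*} [AddCommGroup B] [Module (∀ j, R j) B]
    (s : ∀ j, R j) (x : comp R i B) : s • (x : B) = (Pi.single i (s i) : ∀ j, R j) • (x : B) := by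
  conv_lhs => rw [← comp_spec R i x, ← mul_smul, mul_eIdem]

/-- Lifting property of the component of a projective module. -/
theorem comp_lifting (N : Type*) [AddCommGroup N] [Module (∀ j, R j) N]
    [Module.Projective (∀ j, R j) N]
    {A : Type*} {B : Type*} [AddCommGroup A] [AddCommGroup B]
    [Module (R i) A] [Module (R i) B]
    (g : A →ₗ[R i] B) (hg : Function.Surjective g) (f : comp R i N →ₗ[R i] B) :
    ∃ h : comp R i N →ₗ[R i] A, g ∘ₗ h = f := by
  letI : Module (∀ j, R j) A := Module.compHom A (Pi.evalRingHom R i)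
  letI : Module (∀ j, R j) B := Module.compHom B (Pi.evalRingHom R i)
  let f' : N →ₗ[∀ j, R j] B :=
    { toFun := fun x => f ⟨eIdem R i • x, eIdem_smul_mem R i x⟩
      map_add' := fun x y => by
        show f ⟨eIdem R i • (x + y), _⟩ = f ⟨eIdem R i • x, _⟩ + f ⟨eIdem R i • y, _⟩
        rw [← map_add]
        congr 1
        exact Subtype.ext (smul_add _ _ _)
      map_smul' := fun s x => by
        show f ⟨eIdem R i • (s • x), _⟩ = s i • f ⟨eIdem R i • x, _⟩
        have h1 : (⟨eIdem R i • (s • x), eIdem_smul_mem R i _⟩ : comp R i N)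
            = s i • (⟨eIdem R i • x, eIdem_smul_mem R i x⟩ : comp R i N) := by
          apply Subtype.ext
          show eIdem R i • s • x = (Pi.single i (s i) : ∀ j, R j) • eIdem R i • x
          rw [← mul_smul, ← mul_smul, single_mul_eIdem, mul_comm, mul_eIdem]
        rw [h1, map_smul] }
  let g' : A →ₗ[∀ j, R j] B :=
    { toFun := g
      map_add' := map_add g
      map_smul' := fun s a => map_smul g (s i) a }
  obtain ⟨h', hh'⟩ := Module.projective_lifting_property g' f' hg
  refine ⟨{ toFun := fun x => h' (x : N)
            map_add' := fun x y => by
              show h' ((x + y : comp R i N) : N) = h' (x : N) + h' (y : N)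
              rw [Submodule.coe_add, map_add]
            map_smul' := fun r x => by
              show h' ((r • x : comp R i N) : N) = r • h' (x : N)
              rw [comp_smul_coe, map_smul]
              show (Pi.single i r : ∀ j, R j) i • h' (x : N) = r • h' (x : N)
              rw [Pi.single_eq_same] }, ?_⟩
  ext x
  show g (h' (x : N)) = f x
  have : g (h' (x : N)) = g' (h' (x : N)) := rfl
  rw [this, ← LinearMap.comp_apply, hh']
  show f ⟨eIdem R i • (x : N), _⟩ = f x
  congr 1
  exact Subtype.ext (comp_spec R i x)

theorem comp_projective (N : Type v) [AddCommGroup N] [Module (∀ j, R j) N]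
    [Module.Projective (∀ j, R j) N] : Module.Projective (R i) (comp R i N) :=
  Module.Projective.of_lifting_property'' fun f hf => comp_lifting R i N f hf .id

/-- Lifting property for a projective `R i`-module viewed as a module over the product
  via the evaluation map (the compatibility is phrased by `hX`). -/
theorem res_lifting (X : Type v) [AddCommGroup X] [Module (R i) X]
    [Module.Projective (R i) X] [Module (∀ j, R j) X]
    (hX : ∀ (s : ∀ j, R j) (x : X), s • x = s i • x)
    {A : Type*} {B : Type*} [AddCommGroup A] [AddCommGroup B]
    [Module (∀ j, R j) A] [Module (∀ j, R j) B]
    (g : A →ₗ[∀ j, R j] B) (hg : Function.Surjective g) (f : X →ₗ[∀ j, R j] B) :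
    ∃ h : X →ₗ[∀ j, R j] A, g ∘ₗ h = f := by
  let f₀ : X →ₗ[R i] comp R i B :=
    { toFun := fun x => ⟨f x, by
        rw [comp_mem_iff, ← map_smul, hX, eIdem_apply_self, one_smul]⟩
      map_add' := fun x y => Subtype.ext (map_add f x y)
      map_smul' := fun r x => Subtype.ext (by
        show f (r • x) = (Pi.single i r : ∀ j, R j) • f x
        rw [← map_smul, hX, Pi.single_eq_same]) }
  have hsurj : Function.Surjective (compMap R i g) := compMap_surjective R i g hg
  obtain ⟨h₀, hh₀⟩ := Module.projective_lifting_property (compMap R i g) f₀ hsurj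
  refine ⟨{ toFun := fun x => (h₀ x : A)
            map_add' := fun x y => by
              show ((h₀ (x + y) : comp R i A) : A) = _
              rw [map_add, Submodule.coe_add]
            map_smul' := fun s x => by
              show ((h₀ (s • x) : comp R i A) : A) = s • (h₀ x : A)
              rw [hX s x, map_smul, comp_smul_coe, ← single_smul_eq] }, ?_⟩
  ext x
  show g ((h₀ x : A)) = f x
  exact congrArg Subtype.val (LinearMap.congr_fun hh₀ x)

theorem res_projective (X : Type v) [AddCommGroup X] [Module (R i) X]
    [Module.Projective (R i) X] [Module (∀ j, R j) X]
    (hX : ∀ (s : ∀ j, R j) (x : X), s • x = s i • x) :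
    Module.Projective (∀ j, R j) X :=
  Module.Projective.of_lifting_property'' fun f hf => res_lifting R i X hX f hf .id

end Proj

section PiProj
variable (P : ∀ j : Fin m, Type v) [∀ j, AddCommGroup (P j)] [∀ j, Module (R j) (P j)]

lemma eIdem_smul_single (x : P i) :
    eIdem R i • (Pi.single i x : ∀ j, P j) = Pi.single i x := by
  funext j
  show eIdem R i j • (Pi.single i x : ∀ j, P j) j = (Pi.single i x : ∀ j, P j) j
  rcases eq_or_ne j i with rfl | h
  · rw [eIdem_apply_self, one_smul]
  · rw [Pi.single_eq_of_ne h, smul_zero]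

lemma single_smul_single (r : R i) (x : P i) :
    (Pi.single i r : ∀ j, R j) • (Pi.single i x : ∀ j, P j) = Pi.single i (r • x) := by
  funext j
  show (Pi.single i r : ∀ j, R j) j • (Pi.single i x : ∀ j, P j) j
      = (Pi.single i (r • x) : ∀ j, P j) j
  rcases eq_or_ne j i with rfl | h
  · rw [Pi.single_eq_same, Pi.single_eq_same, Pi.single_eq_same]
  · rw [Pi.single_eq_of_ne h, Pi.single_eq_of_ne h, Pi.single_eq_of_ne h, smul_zero]

theorem pi_lifting [∀ j, Module.Projective (R j) (P j)]
    {A B : Type*} [AddCommGroup A] [AddCommGroup B]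
    [Module (∀ j, R j) A] [Module (∀ j, R j) B]
    (g : A →ₗ[∀ j, R j] B) (hg : Function.Surjective g) (f : (∀ j, P j) →ₗ[∀ j, R j] B) :
    ∃ h : (∀ j, P j) →ₗ[∀ j, R j] A, g ∘ₗ h = f := by
  have mem : ∀ (j) (x : P j), f (Pi.single j x) ∈ comp R j B := fun j x => by
    rw [comp_mem_iff, ← map_smul, eIdem_smul_single]
  let f₀ : ∀ j, P j →ₗ[R j] comp R j B := fun j =>
    { toFun := fun x => ⟨f (Pi.single j x), mem j x⟩
      map_add' := fun x y => Subtype.ext (by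
        show f (Pi.single j (x + y)) = f (Pi.single j x) + f (Pi.single j y)
        rw [Pi.single_add, map_add])
      map_smul' := fun r x => Subtype.ext (by
        show f (Pi.single j (r • x)) = (Pi.single j r : ∀ j', R j') • f (Pi.single j x)
        rw [← map_smul, single_smul_single]) }
  have hlift : ∀ j, ∃ h : P j →ₗ[R j] comp R j A, (compMap R j g) ∘ₗ h = f₀ j := fun j => by
    have hs : Function.Surjective (compMap R j g) := compMap_surjective R j g hg
    exact Module.projective_lifting_property _ _ hs
  choose h₀ hh₀ using hlift
  refine ⟨{ toFun := fun x => ∑ j, ((h₀ j (x j) : comp R j A) : A)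
            map_add' := fun x y => by
              show (∑ j, ((h₀ j ((x + y) j) : comp R j A) : A)) = _
              rw [← Finset.sum_add_distrib]
              congr 1
              funext j
              show ((h₀ j (x j + y j) : comp R j A) : A) = _
              rw [map_add, Submodule.coe_add]
            map_smul' := fun s x => by
              show (∑ j, ((h₀ j ((s • x) j) : comp R j A) : A))
                  = s • ∑ j, ((h₀ j (x j) : comp R j A) : A)
              rw [Finset.smul_sum]
              congr 1
              funext j
              show ((h₀ j (s j • x j) : comp R j A) : A) = s • ((h₀ j (x j) : comp R j A) : A)
              rw [map_smul, comp_smul_coe, ← single_smul_eq] }, ?_⟩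
  ext x
  show g (∑ j, ((h₀ j (x j) : comp R j A) : A)) = f x
  rw [map_sum]
  have : ∀ j, g ((h₀ j (x j) : comp R j A) : A) = f (Pi.single j (x j)) := fun j => by
    have := congrArg Subtype.val (LinearMap.congr_fun (hh₀ j) (x j))
    exact this
  rw [Finset.sum_congr rfl fun j _ => this j, ← map_sum]
  congr 1
  exact Finset.univ_sum_single x

theorem pi_projective [∀ j, Module.Projective (R j) (P j)] :
    Module.Projective (∀ j, R j) (∀ j, P j) :=
  Module.Projective.of_lifting_property'' fun f hf =>
    pi_lifting (P := P) (g := f) (hg := hf) (f := LinearMap.id)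

end PiProj

section Transfer

lemma eIdem_mul_eIdem_ne {j j' : Fin m} (h : j ≠ j') :
    (eIdem R j * eIdem R j' : ∀ k, R k) = 0 := by
  funext k
  show eIdem R j k * eIdem R j' k = 0
  rcases eq_or_ne k j with rfl | hk
  · rw [show eIdem R j' k = 0 from Pi.single_eq_of_ne h 1, mul_zero]
  · rw [show eIdem R j k = 0 from Pi.single_eq_of_ne hk 1, zero_mul]

variable {X : Type*} [AddCommGroup X] [Module (R i) X] [Module (∀ j, R j) X]

lemma hx_eIdem_smul (hX : ∀ (s : ∀ j, R j) (x : X), s • x = s i • x) (x : X) :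
    eIdem R i • x = x := by
  rw [hX, eIdem_apply_self, one_smul]

lemma hx_single_smul (hX : ∀ (s : ∀ j, R j) (x : X), s • x = s i • x) (r : R i) (x : X) :
    (Pi.single i r : ∀ j, R j) • x = r • x := by
  rw [hX, Pi.single_eq_same]

/-- An `R i`-linear map between modules whose product-ring action factors through
evaluation at `i` is linear over the product ring. -/
def resLin {Y : Type*} [AddCommGroup Y] [Module (R i) Y] [Module (∀ j, R j) Y]
    (hX : ∀ (s : ∀ j, R j) (x : X), s • x = s i • x)
    (hY : ∀ (s : ∀ j, R j) (y : Y), s • y = s i • y)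
    (f : X →ₗ[R i] Y) : X →ₗ[∀ j, R j] Y where
  toFun := f
  map_add' := map_add f
  map_smul' s x := by
    rw [RingHom.id_apply, hX, hY]
    exact map_smul f (s i) x

@[simp] lemma resLin_apply {Y : Type*} [AddCommGroup Y] [Module (R i) Y]
    [Module (∀ j, R j) Y] (hX) (hY) (f : X →ₗ[R i] Y) (x : X) :
    resLin R i hX hY f x = f x := rfl

variable {N : Type*} [AddCommGroup N] [Module (∀ j, R j) N]
variable {N' : Type*} [AddCommGroup N'] [Module (∀ j, R j) N']

/-- Extend an `R i`-linear map defined on the `i`-th component to the whole module. -/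
def extendMap (hX : ∀ (s : ∀ j, R j) (x : X), s • x = s i • x)
    (f : comp R i N →ₗ[R i] X) : N →ₗ[∀ j, R j] X where
  toFun x := f ⟨eIdem R i • x, eIdem_smul_mem R i x⟩
  map_add' x y := by
    show f ⟨eIdem R i • (x + y), eIdem_smul_mem R i _⟩
        = f ⟨eIdem R i • x, eIdem_smul_mem R i x⟩ + f ⟨eIdem R i • y, eIdem_smul_mem R i y⟩
    rw [show (⟨eIdem R i • (x + y), eIdem_smul_mem R i _⟩ : comp R i N)
        = ⟨eIdem R i • x, eIdem_smul_mem R i x⟩ + ⟨eIdem R i • y, eIdem_smul_mem R i y⟩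
      from Subtype.ext (smul_add _ _ _), map_add]
  map_smul' s x := by
    rw [RingHom.id_apply]
    show f ⟨eIdem R i • (s • x), eIdem_smul_mem R i _⟩
        = s • f ⟨eIdem R i • x, eIdem_smul_mem R i x⟩
    rw [show (⟨eIdem R i • (s • x), eIdem_smul_mem R i _⟩ : comp R i N)
        = s i • ⟨eIdem R i • x, eIdem_smul_mem R i x⟩ from Subtype.ext (by
          show eIdem R i • s • x = (Pi.single i (s i) : ∀ j, R j) • eIdem R i • x
          rw [← mul_smul, ← mul_smul, single_mul_eIdem, mul_comm, mul_eIdem]),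
      map_smul, hX]

@[simp] lemma extendMap_apply (hX) (f : comp R i N →ₗ[R i] X) (x : N) :
    extendMap R i hX f x = f ⟨eIdem R i • x, eIdem_smul_mem R i x⟩ := rfl

/-- Restrict a product-linear map to the `i`-th component. -/
def restrictMap (hX : ∀ (s : ∀ j, R j) (x : X), s • x = s i • x)
    (h : N →ₗ[∀ j, R j] X) : comp R i N →ₗ[R i] X where
  toFun x := h (x : N)
  map_add' x y := by
    show h ((x + y : comp R i N) : N) = h (x : N) + h (y : N)
    rw [Submodule.coe_add, map_add]
  map_smul' r x := by
    rw [RingHom.id_apply]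
    show h ((r • x : comp R i N) : N) = r • h (x : N)
    rw [comp_smul_coe, map_smul, hx_single_smul R i hX]

@[simp] lemma restrictMap_apply (hX) (h : N →ₗ[∀ j, R j] X) (x : comp R i N) :
    restrictMap R i hX h x = h (x : N) := rfl

/-- A product-linear map into a compatible module lands in the `i`-th component. -/
def intoCompMap {B : Type*} [AddCommGroup B] [Module (∀ j, R j) B]
    (hX : ∀ (s : ∀ j, R j) (x : X), s • x = s i • x)
    (f : X →ₗ[∀ j, R j] B) : X →ₗ[R i] comp R i B where
  toFun x := ⟨f x, by rw [comp_mem_iff, ← map_smul, hx_eIdem_smul R i hX]⟩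
  map_add' x y := Subtype.ext (map_add f x y)
  map_smul' r x := Subtype.ext (by
    show f (r • x) = (Pi.single i r : ∀ j, R j) • f x
    rw [← map_smul, hx_single_smul R i hX])

@[simp] lemma intoCompMap_coe {B : Type*} [AddCommGroup B] [Module (∀ j, R j) B]
    (hX) (f : X →ₗ[∀ j, R j] B) (x : X) :
    ((intoCompMap R i hX f x : comp R i B) : B) = f x := rfl

/-- Upgrade an `R i`-linear map into the `i`-th component to a product-linear map. -/
def fromCompMap {A : Type*} [AddCommGroup A] [Module (∀ j, R j) A]
    (hX : ∀ (s : ∀ j, R j) (x : X), s • x = s i • x)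
    (h : X →ₗ[R i] comp R i A) : X →ₗ[∀ j, R j] A where
  toFun x := (h x : A)
  map_add' x y := by
    show ((h (x + y) : comp R i A) : A) = _
    rw [map_add, Submodule.coe_add]
  map_smul' s x := by
    rw [RingHom.id_apply]
    show ((h (s • x) : comp R i A) : A) = s • (h x : A)
    rw [hX s x, map_smul, comp_smul_coe, ← single_smul_eq]

@[simp] lemma fromCompMap_apply {A : Type*} [AddCommGroup A] [Module (∀ j, R j) A]
    (hX) (h : X →ₗ[R i] comp R i A) (x : X) :
    fromCompMap R i hX h x = (h x : A) := rfl

/-- `X` is isomorphic to its own `i`-th component when the action is compatible. -/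
def selfCompEquiv (hX : ∀ (s : ∀ j, R j) (x : X), s • x = s i • x) :
    X ≃ₗ[R i] comp R i X where
  toFun x := ⟨x, by rw [comp_mem_iff, hx_eIdem_smul R i hX]⟩
  invFun x := (x : X)
  left_inv x := rfl
  right_inv x := Subtype.ext rfl
  map_add' x y := Subtype.ext rfl
  map_smul' r x := Subtype.ext (by
    show r • x = (Pi.single i r : ∀ j, R j) • x
    rw [hx_single_smul R i hX])

/-- Exactness transfers to components. -/
lemma comp_range_ker {N'' : Type*} [AddCommGroup N''] [Module (∀ j, R j) N'']
    (a : N →ₗ[∀ j, R j] N') (b : N' →ₗ[∀ j, R j] N'')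
    (hab : LinearMap.range a = LinearMap.ker b) :
    LinearMap.range (compMap R i a) = LinearMap.ker (compMap R i b) := by
  apply Submodule.ext
  intro x
  rw [LinearMap.mem_range, LinearMap.mem_ker]
  constructor
  · rintro ⟨y, rfl⟩
    apply Subtype.ext
    show b (a (y : N)) = (0 : N'')
    have : a (y : N) ∈ LinearMap.ker b := hab ▸ LinearMap.mem_range_self a (y : N)
    exact this
  · intro hx
    have hx' : b (x : N') = 0 := congrArg Subtype.val hx
    have : (x : N') ∈ LinearMap.range a := by
      rw [hab, LinearMap.mem_ker]; exact hx'
    obtain ⟨y, hy⟩ := this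
    refine ⟨⟨eIdem R i • y, eIdem_smul_mem R i y⟩, Subtype.ext ?_⟩
    show a (eIdem R i • y) = (x : N')
    rw [map_smul, hy]
    exact comp_spec R i x

/-- Exactness transfers along `resLin`. -/
lemma res_range_ker {Y Z : Type*} [AddCommGroup Y] [Module (R i) Y] [Module (∀ j, R j) Y]
    [AddCommGroup Z] [Module (R i) Z] [Module (∀ j, R j) Z]
    (hX : ∀ (s : ∀ j, R j) (x : X), s • x = s i • x)
    (hY : ∀ (s : ∀ j, R j) (y : Y), s • y = s i • y)
    (hZ : ∀ (s : ∀ j, R j) (z : Z), s • z = s i • z)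
    (a : X →ₗ[R i] Y) (b : Y →ₗ[R i] Z)
    (hab : LinearMap.range a = LinearMap.ker b) :
    LinearMap.range (resLin R i hX hY a) = LinearMap.ker (resLin R i hY hZ b) := by
  apply Submodule.ext
  intro y
  rw [LinearMap.mem_range, LinearMap.mem_ker]
  have h1 : y ∈ LinearMap.range a ↔ y ∈ LinearMap.ker b := by rw [hab]
  rw [LinearMap.mem_range, LinearMap.mem_ker] at h1
  exact h1

/-- An isomorphism with a range transfers to components. -/
noncomputable def compIsoRange {M' : Type*} [AddCommGroup M'] [Module (∀ j, R j) M']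
    (a : N →ₗ[∀ j, R j] N') (e : M' ≃ₗ[∀ j, R j] LinearMap.range a) :
    (comp R i M') ≃ₗ[R i] LinearMap.range (compMap R i a) := by
  have hmem1 : ∀ x : comp R i M', ((e (x : M') : LinearMap.range a) : N') ∈ comp R i N' := by
    intro x
    rw [comp_mem_iff, ← Submodule.coe_smul, ← map_smul, comp_spec]
  have hmem2 : ∀ x : comp R i M',
      (⟨((e (x : M') : LinearMap.range a) : N'), hmem1 x⟩ : comp R i N')
        ∈ LinearMap.range (compMap R i a) := by
    intro x
    obtain ⟨y, hy⟩ := (e (x : M')).2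
    refine ⟨⟨eIdem R i • y, eIdem_smul_mem R i y⟩, Subtype.ext ?_⟩
    show a (eIdem R i • y) = _
    rw [map_smul, hy]
    exact hmem1 x
  refine LinearEquiv.ofBijective
    { toFun := fun x : comp R i M' => ⟨⟨((e (x : M') : LinearMap.range a) : N'), hmem1 x⟩, hmem2 x⟩
      map_add' := fun x y => Subtype.ext (Subtype.ext (by
        show ((e ((x : M') + (y : M')) : LinearMap.range a) : N') = _
        rw [map_add, Submodule.coe_add]
        rfl))
      map_smul' := fun r x => Subtype.ext (Subtype.ext (by
        show ((e ((r • x : comp R i M') : M') : LinearMap.range a) : N')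
            = (Pi.single i r : ∀ j, R j) • ((e (x : M') : LinearMap.range a) : N')
        rw [comp_smul_coe, map_smul, Submodule.coe_smul])) } ⟨?_, ?_⟩
  · intro x y hxy
    have h1 := congrArg Subtype.val (congrArg Subtype.val hxy)
    have h2 : e (x : M') = e (y : M') := Subtype.ext h1
    exact Subtype.ext (e.injective h2)
  · rintro ⟨⟨z, hz1⟩, hz2⟩
    obtain ⟨y, hy⟩ := hz2
    have hzr : z ∈ LinearMap.range a := ⟨(y : N), congrArg Subtype.val hy⟩
    have hfix : eIdem R i • (⟨z, hzr⟩ : LinearMap.range a) = ⟨z, hzr⟩ :=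
      Subtype.ext (by show eIdem R i • z = z; exact hz1)
    have hmem : (e.symm ⟨z, hzr⟩ : M') ∈ comp R i M' := by
      rw [comp_mem_iff, ← map_smul, hfix]
    refine ⟨⟨e.symm ⟨z, hzr⟩, hmem⟩, Subtype.ext (Subtype.ext ?_)⟩
    show ((e (e.symm ⟨z, hzr⟩) : LinearMap.range a) : N') = z
    rw [e.apply_symm_apply]

/-- Transfer of the lifting property from the product ring to components. -/
lemma lift_transfer {A B C : Type*} [AddCommGroup A] [Module (∀ j, R j) A]
    [AddCommGroup B] [Module (∀ j, R j) B] [AddCommGroup C] [Module (∀ j, R j) C]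
    (a : A →ₗ[∀ j, R j] B) (b : B →ₗ[∀ j, R j] C)
    {Q : Type*} [AddCommGroup Q] [Module (R i) Q] [Module (∀ j, R j) Q]
    (hQ : ∀ (s : ∀ j, R j) (q : Q), s • q = s i • q)
    (g : comp R i B →ₗ[R i] Q) (hg : g ∘ₗ compMap R i a = 0)
    (HS : ∀ g' : B →ₗ[∀ j, R j] Q, g' ∘ₗ a = 0 → ∃ h' : C →ₗ[∀ j, R j] Q, h' ∘ₗ b = g') :
    ∃ h : comp R i C →ₗ[R i] Q, h ∘ₗ compMap R i b = g := by
  have hg' : (extendMap R i hQ g) ∘ₗ a = 0 := by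
    ext x
    show extendMap R i hQ g (a x) = 0
    rw [extendMap_apply]
    have heq : (⟨eIdem R i • a x, eIdem_smul_mem R i _⟩ : comp R i B)
        = compMap R i a ⟨eIdem R i • x, eIdem_smul_mem R i x⟩ := Subtype.ext (by
      show eIdem R i • a x = a (eIdem R i • x)
      rw [map_smul])
    rw [heq]
    exact LinearMap.congr_fun hg _
  obtain ⟨h', hh'⟩ := HS _ hg'
  refine ⟨restrictMap R i hQ h', ?_⟩
  ext x
  show restrictMap R i hQ h' (compMap R i b x) = g x
  rw [restrictMap_apply]
  have h1 : h' (b (x : B)) = extendMap R i hQ g (x : B) := LinearMap.congr_fun hh' (x : B)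
  rw [show ((compMap R i b x : comp R i C) : C) = b (x : B) from rfl, h1, extendMap_apply]
  congr 1
  exact Subtype.ext (comp_spec R i x)

/-- Transfer of the lifting property from a component to the product ring. -/
lemma lift_transfer' {A B C : Type*}
    [AddCommGroup A] [Module (R i) A] [Module (∀ j, R j) A]
    [AddCommGroup B] [Module (R i) B] [Module (∀ j, R j) B]
    [AddCommGroup C] [Module (R i) C] [Module (∀ j, R j) C]
    (hA : ∀ (s : ∀ j, R j) (x : A), s • x = s i • x)
    (hB : ∀ (s : ∀ j, R j) (x : B), s • x = s i • x)
    (hC : ∀ (s : ∀ j, R j) (x : C), s • x = s i • x)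
    (a : A →ₗ[R i] B) (b : B →ₗ[R i] C)
    {Q : Type*} [AddCommGroup Q] [Module (∀ j, R j) Q]
    (g : B →ₗ[∀ j, R j] Q) (hg : g ∘ₗ resLin R i hA hB a = 0)
    (HR : ∀ g₀ : B →ₗ[R i] comp R i Q, g₀ ∘ₗ a = 0 →
      ∃ h₀ : C →ₗ[R i] comp R i Q, h₀ ∘ₗ b = g₀) :
    ∃ h : C →ₗ[∀ j, R j] Q, h ∘ₗ resLin R i hB hC b = g := by
  have hg0 : (intoCompMap R i hB g) ∘ₗ a = 0 := by
    ext x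
    show g (a x) = ((0 : comp R i Q) : Q)
    exact LinearMap.congr_fun hg x
  obtain ⟨h₀, hh₀⟩ := HR _ hg0
  refine ⟨fromCompMap R i hC h₀, ?_⟩
  ext x
  show ((h₀ (b x) : comp R i Q) : Q) = g x
  exact congrArg Subtype.val (LinearMap.congr_fun hh₀ x)

/-- An isomorphism with the range of an `R i`-linear map transfers along `resLin`. -/
noncomputable def resIsoRange
    {Y Z : Type*} [AddCommGroup Y] [Module (R i) Y] [Module (∀ j, R j) Y]
    [AddCommGroup Z] [Module (R i) Z] [Module (∀ j, R j) Z]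
    (hX : ∀ (s : ∀ j, R j) (x : X), s • x = s i • x)
    (hY : ∀ (s : ∀ j, R j) (x : Y), s • x = s i • x)
    (hZ : ∀ (s : ∀ j, R j) (x : Z), s • x = s i • x)
    (a : Y →ₗ[R i] Z) (e : X ≃ₗ[R i] LinearMap.range a) :
    X ≃ₗ[∀ j, R j] LinearMap.range (resLin R i hY hZ a) := by
  have hmem : ∀ x : X, ((e x : LinearMap.range a) : Z)
      ∈ LinearMap.range (resLin R i hY hZ a) := by
    intro x
    obtain ⟨y, hy⟩ := (e x).2
    exact ⟨y, hy⟩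
  refine LinearEquiv.ofBijective
    { toFun := fun x : X => ⟨((e x : LinearMap.range a) : Z), hmem x⟩
      map_add' := fun x y => Subtype.ext (by
        show ((e (x + y) : LinearMap.range a) : Z) = _
        rw [map_add, Submodule.coe_add]
        rfl)
      map_smul' := fun s x => Subtype.ext (by
        show ((e (s • x) : LinearMap.range a) : Z)
            = s • ((e x : LinearMap.range a) : Z)
        rw [hX s x, map_smul, Submodule.coe_smul, hZ]) } ⟨?_, ?_⟩
  · intro x y hxy
    exact e.injective (Subtype.ext (congrArg Subtype.val hxy))
  · rintro ⟨z, y, hy⟩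
    refine ⟨e.symm ⟨z, ⟨y, hy⟩⟩, Subtype.ext ?_⟩
    show ((e (e.symm ⟨z, _⟩) : LinearMap.range a) : Z) = z
    rw [e.apply_symm_apply]

end Transfer

section PiMap
variable {R}
variable {A B C : ∀ j : Fin m, Type v}
variable [∀ j, AddCommGroup (A j)] [∀ j, Module (R j) (A j)]
variable [∀ j, AddCommGroup (B j)] [∀ j, Module (R j) (B j)]
variable [∀ j, AddCommGroup (C j)] [∀ j, Module (R j) (C j)]

/-- Componentwise linear maps assemble to a product-linear map. -/
def piMapLin (f : ∀ j, A j →ₗ[R j] B j) : (∀ j, A j) →ₗ[∀ j, R j] (∀ j, B j) where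
  toFun x := fun j => f j (x j)
  map_add' x y := funext fun j => map_add (f j) _ _
  map_smul' s x := funext fun j => map_smul (f j) (s j) (x j)

@[simp] lemma piMapLin_apply (f : ∀ j, A j →ₗ[R j] B j) (x : ∀ j, A j) (j : Fin m) :
    piMapLin f x j = f j (x j) := rfl

lemma piMapLin_single (f : ∀ j, A j →ₗ[R j] B j) (j : Fin m) (x : A j) :
    piMapLin f (Pi.single j x) = Pi.single j (f j x) := by
  funext k
  rcases eq_or_ne k j with rfl | hk
  · rw [piMapLin_apply, Pi.single_eq_same, Pi.single_eq_same]
  · rw [piMapLin_apply, Pi.single_eq_of_ne hk, Pi.single_eq_of_ne hk, map_zero]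

lemma pi_range_ker (a : ∀ j, A j →ₗ[R j] B j) (b : ∀ j, B j →ₗ[R j] C j)
    (h : ∀ j, LinearMap.range (a j) = LinearMap.ker (b j)) :
    LinearMap.range (piMapLin a) = LinearMap.ker (piMapLin b) := by
  apply Submodule.ext
  intro x
  rw [LinearMap.mem_range, LinearMap.mem_ker]
  constructor
  · rintro ⟨y, rfl⟩
    funext j
    have : a j (y j) ∈ LinearMap.ker (b j) := (h j) ▸ LinearMap.mem_range_self (a j) (y j)
    exact this
  · intro hx
    have hj : ∀ j, ∃ y, a j y = x j := by
      intro j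
      have : x j ∈ LinearMap.ker (b j) := congrFun hx j
      rw [← h j] at this
      exact this
    choose y hy using hj
    exact ⟨y, funext hy⟩

variable {M : Type*} [AddCommGroup M] [Module (∀ j, R j) M]

lemma eIdem_smul_smul (j : Fin m) (s : ∀ k, R k) (x : M) :
    eIdem R j • (s • x) = (Pi.single j (s j) : ∀ k, R k) • (eIdem R j • x) := by
  rw [← mul_smul, ← mul_smul, single_mul_eIdem, mul_comm, mul_eIdem]

/-- A module over the product ring is isomorphic to the range of `piMapLin f`
  whenever each component is isomorphic to the range of `f j`. -/
noncomputable def piIsoRange (f : ∀ j, A j →ₗ[R j] B j)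
    (e : ∀ j, (comp R j M) ≃ₗ[R j] LinearMap.range (f j)) :
    M ≃ₗ[∀ j, R j] LinearMap.range (piMapLin f) := by
  classical
  have hsum : (∑ j, eIdem R j : ∀ k, R k) = 1 := Finset.univ_sum_single (1 : ∀ k, R k)
  let φ : M →ₗ[∀ j, R j] (∀ j, B j) :=
    { toFun := fun x => fun j =>
        ((e j ⟨eIdem R j • x, eIdem_smul_mem R j x⟩ : LinearMap.range (f j)) : B j)
      map_add' := fun x y => funext fun j => by
        show ((e j ⟨eIdem R j • (x + y), _⟩ : LinearMap.range (f j)) : B j) = _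
        rw [show (⟨eIdem R j • (x + y), eIdem_smul_mem R j _⟩ : comp R j M)
            = ⟨eIdem R j • x, eIdem_smul_mem R j x⟩ + ⟨eIdem R j • y, eIdem_smul_mem R j y⟩
          from Subtype.ext (smul_add _ _ _), map_add, Submodule.coe_add]
        rfl
      map_smul' := fun s x => funext fun j => by
        show ((e j ⟨eIdem R j • (s • x), _⟩ : LinearMap.range (f j)) : B j)
            = s j • ((e j ⟨eIdem R j • x, _⟩ : LinearMap.range (f j)) : B j)
        rw [show (⟨eIdem R j • (s • x), eIdem_smul_mem R j _⟩ : comp R j M)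
            = s j • ⟨eIdem R j • x, eIdem_smul_mem R j x⟩
          from Subtype.ext (eIdem_smul_smul j s x), map_smul, Submodule.coe_smul] }
  have hφmem : ∀ x : M, φ x ∈ LinearMap.range (piMapLin f) := by
    intro x
    have hj : ∀ j, ∃ y, f j y = φ x j := by
      intro j
      obtain ⟨y, hy⟩ := (e j ⟨eIdem R j • x, eIdem_smul_mem R j x⟩).2
      exact ⟨y, hy⟩
    choose y hy using hj
    exact ⟨y, funext hy⟩
  refine LinearEquiv.ofBijective (φ.codRestrict _ hφmem) ⟨?_, ?_⟩
  · intro x y hxy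
    have hφ : φ x = φ y := congrArg Subtype.val hxy
    have hcomp : ∀ j, eIdem R j • x = eIdem R j • y := by
      intro j
      have h1 : (e j ⟨eIdem R j • x, eIdem_smul_mem R j x⟩ : LinearMap.range (f j))
          = e j ⟨eIdem R j • y, eIdem_smul_mem R j y⟩ := Subtype.ext (congrFun hφ j)
      exact congrArg Subtype.val ((e j).injective h1)
    calc x = (1 : ∀ k, R k) • x := (one_smul _ x).symm
      _ = (∑ j, eIdem R j : ∀ k, R k) • x := by rw [hsum]
      _ = ∑ j, eIdem R j • x := Finset.sum_smul
      _ = ∑ j, eIdem R j • y := Finset.sum_congr rfl fun j _ => hcomp j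
      _ = (∑ j, eIdem R j : ∀ k, R k) • y := Finset.sum_smul.symm
      _ = (1 : ∀ k, R k) • y := by rw [hsum]
      _ = y := one_smul _ y
  · rintro ⟨w, hw⟩
    have hwj : ∀ j, w j ∈ LinearMap.range (f j) := by
      intro j
      obtain ⟨y, hy⟩ := hw
      exact ⟨y j, congrFun hy j⟩
    set zc : ∀ j, comp R j M := fun j => (e j).symm ⟨w j, hwj j⟩ with hzc
    refine ⟨∑ j, (zc j : M), Subtype.ext (funext fun j' => ?_)⟩
    have hfix : eIdem R j' • (∑ j, (zc j : M)) = (zc j' : M) := by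
      rw [Finset.smul_sum]
      rw [Finset.sum_eq_single j']
      · exact comp_spec R j' (zc j')
      · intro j _ hj
        rw [← comp_spec R j (zc j), ← mul_smul, eIdem_mul_eIdem_ne (R := R) (Ne.symm hj), zero_smul]
      · intro h
        exact absurd (Finset.mem_univ j') h
    show ((e j' ⟨eIdem R j' • (∑ j, (zc j : M)), _⟩ : LinearMap.range (f j')) : B j') = w j'
    rw [show (⟨eIdem R j' • (∑ j, (zc j : M)), eIdem_smul_mem R j' _⟩ : comp R j' M) = zc j'
      from Subtype.ext hfix, hzc]
    rw [(e j').apply_symm_apply]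

end PiMap

section PiLift
variable {R}
variable {A : ∀ j : Fin m, Type v} [∀ j, AddCommGroup (A j)] [∀ j, Module (R j) (A j)]
variable {Q : Type*} [AddCommGroup Q] [Module (∀ j, R j) Q]

/-- The `j`-th component of a product-linear map out of a product module. -/
def piComponent (g : (∀ j, A j) →ₗ[∀ j, R j] Q) (j : Fin m) : A j →ₗ[R j] comp R j Q where
  toFun x := ⟨g (Pi.single j x), by rw [comp_mem_iff, ← map_smul, eIdem_smul_single]⟩
  map_add' x y := Subtype.ext (by
    show g (Pi.single j (x + y)) = g (Pi.single j x) + g (Pi.single j y)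
    rw [Pi.single_add, map_add])
  map_smul' r x := Subtype.ext (by
    show g (Pi.single j (r • x)) = (Pi.single j r : ∀ k, R k) • g (Pi.single j x)
    rw [← map_smul, single_smul_single])

@[simp] lemma piComponent_coe (g : (∀ j, A j) →ₗ[∀ j, R j] Q) (j : Fin m) (x : A j) :
    ((piComponent g j x : comp R j Q) : Q) = g (Pi.single j x) := rfl

/-- Assemble componentwise maps into the components of `Q` into a product-linear map. -/
def piAssemble (h : ∀ j, A j →ₗ[R j] comp R j Q) : (∀ j, A j) →ₗ[∀ j, R j] Q where
  toFun x := ∑ j, ((h j (x j) : comp R j Q) : Q)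
  map_add' x y := by
    show (∑ j, ((h j ((x + y) j) : comp R j Q) : Q)) = _
    rw [← Finset.sum_add_distrib]
    congr 1
    funext j
    show ((h j (x j + y j) : comp R j Q) : Q) = _
    rw [map_add, Submodule.coe_add]
  map_smul' s x := by
    show (∑ j, ((h j ((s • x) j) : comp R j Q) : Q)) = s • ∑ j, ((h j (x j) : comp R j Q) : Q)
    rw [Finset.smul_sum]
    congr 1
    funext j
    show ((h j (s j • x j) : comp R j Q) : Q) = s • ((h j (x j) : comp R j Q) : Q)
    rw [map_smul, comp_smul_coe, ← single_smul_eq]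

@[simp] lemma piAssemble_apply (h : ∀ j, A j →ₗ[R j] comp R j Q) (x : ∀ j, A j) :
    piAssemble h x = ∑ j, ((h j (x j) : comp R j Q) : Q) := rfl

lemma piAssemble_piComponent (g : (∀ j, A j) →ₗ[∀ j, R j] Q) :
    piAssemble (fun j => piComponent g j) = g := by
  ext x
  rw [piAssemble_apply]
  have : ∀ j, ((piComponent g j (x j) : comp R j Q) : Q) = g (Pi.single j (x j)) :=
    fun j => rfl
  rw [Finset.sum_congr rfl fun j _ => this j, ← map_sum]
  congr 1
  exact Finset.univ_sum_single x

end PiLift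
end ProdGP

open ProdGP in
theorem factor_of_prod {m : ℕ} {R : Fin m → Type u} [∀ i, CommRing (R i)] (i : Fin m)
    (H : ∀ M : ModuleCat.{v} (∀ j, R j), IsGorensteinProjective (∀ j, R j) M →
      IsStronglyGorensteinProjective (∀ j, R j) M)
    (M : ModuleCat.{v} (R i)) (hM : IsGorensteinProjective (R i) M) :
    IsStronglyGorensteinProjective (R i) M := by
  classical
  obtain ⟨P, d, hproj, hex, ⟨eM⟩, hlift⟩ := hM
  letI instP : ∀ k : ℤ, Module (∀ j, R j) (P k) :=
    fun k => Module.compHom (P k) (Pi.evalRingHom R i)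
  letI instM : Module (∀ j, R j) M := Module.compHom M (Pi.evalRingHom R i)
  have hP : ∀ (k : ℤ) (s : ∀ j, R j) (x : P k), s • x = s i • x := fun _ _ _ => rfl
  have hMc : ∀ (s : ∀ j, R j) (x : M), s • x = s i • x := fun _ _ => rfl
  have hGP : IsGorensteinProjective (∀ j, R j) (ModuleCat.of (∀ j, R j) M) := by
    refine ⟨fun k => ModuleCat.of (∀ j, R j) (P k),
      fun k => resLin R i (X := (P k : Type v)) (Y := (P (k + 1) : Type v)) (hP k) (hP (k + 1)) (d k),
      fun k => haveI := hproj k; res_projective R i (P k) (hP k),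
      fun k => res_range_ker R i (hP k) (hP (k + 1)) (hP (k + 1 + 1)) (d k) (d (k + 1)) (hex k),
      ⟨resIsoRange R i hMc (hP 0) (hP (0 + 1)) (d 0) eM⟩, ?_⟩
    intro Q hQ k g hgd
    exact lift_transfer' R i (A := P k) (B := P (k + 1)) (C := P (k + 1 + 1))
      (hP k) (hP (k + 1)) (hP (k + 1 + 1)) (d k) (d (k + 1)) g hgd
      (fun g₀ hg₀ => hlift (ModuleCat.of (R i) (comp R i Q))
        (haveI := hQ; comp_projective R i Q) k g₀ hg₀)
  obtain ⟨PP, f, hPPproj, hrk, ⟨e'⟩, hfl⟩ := H (ModuleCat.of (∀ j, R j) M) hGP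
  refine ⟨ModuleCat.of (R i) (comp R i PP), compMap R i f,
    haveI := hPPproj; comp_projective R i PP,
    comp_range_ker R i f f hrk,
    ⟨(selfCompEquiv R i hMc).trans (compIsoRange R i f e')⟩, ?_⟩
  intro Q hQ g hgf
  letI : Module (∀ j, R j) Q := Module.compHom Q (Pi.evalRingHom R i)
  have hQc : ∀ (s : ∀ j, R j) (q : Q), s • q = s i • q := fun _ _ => rfl
  exact lift_transfer R i f f hQc g hgf
    (fun g' hg' => hfl (ModuleCat.of (∀ j, R j) Q)
      (haveI := hQ; res_projective R i Q hQc) g' hg')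

open ProdGP in
theorem prod_of_factors {m : ℕ} {R : Fin m → Type u} [∀ i, CommRing (R i)]
    (H : ∀ i, ∀ M : ModuleCat.{v} (R i), IsGorensteinProjective (R i) M →
      IsStronglyGorensteinProjective (R i) M)
    (M : ModuleCat.{v} (∀ j, R j)) (hM : IsGorensteinProjective (∀ j, R j) M) :
    IsStronglyGorensteinProjective (∀ j, R j) M := by
  classical
  obtain ⟨P, d, hproj, hex, ⟨eM⟩, hlift⟩ := hM
  have hGPi : ∀ i, IsGorensteinProjective (R i) (ModuleCat.of (R i) (comp R i M)) := by
    intro i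
    refine ⟨fun k => ModuleCat.of (R i) (comp R i (P k)),
      fun k => compMap R i (d k),
      fun k => haveI := hproj k; comp_projective R i (P k),
      fun k => comp_range_ker R i (d k) (d (k + 1)) (hex k),
      ⟨compIsoRange R i (d 0) eM⟩, ?_⟩
    intro Q hQ k g hgd
    letI : Module (∀ j, R j) Q := Module.compHom Q (Pi.evalRingHom R i)
    have hQc : ∀ (s : ∀ j, R j) (q : Q), s • q = s i • q := fun _ _ => rfl
    exact lift_transfer R i (d k) (d (k + 1)) hQc g hgd
      (fun g' hg' => hlift (ModuleCat.of (∀ j, R j) Q)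
        (haveI := hQ; res_projective R i Q hQc) k g' hg')
  have hSG : ∀ i, IsStronglyGorensteinProjective (R i) (ModuleCat.of (R i) (comp R i M)) :=
    fun i => H i _ (hGPi i)
  choose PP ff hSGrest using hSG
  have hffproj : ∀ i, Module.Projective (R i) (PP i) := fun i => (hSGrest i).1
  have hffrk : ∀ i, LinearMap.range (ff i) = LinearMap.ker (ff i) := fun i => (hSGrest i).2.1
  have heqv : ∀ i, (comp R i M) ≃ₗ[R i] LinearMap.range (ff i) :=
    fun i => Classical.choice (hSGrest i).2.2.1
  have hffl := fun i => (hSGrest i).2.2.2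
  refine ⟨ModuleCat.of (∀ j, R j) (∀ i, PP i), piMapLin ff,
    haveI := hffproj; pi_projective R (fun i => (PP i : Type v)),
    pi_range_ker ff ff hffrk,
    ⟨piIsoRange ff heqv⟩, ?_⟩
  intro Q hQ g hgf
  have hg₀ : ∀ j, (piComponent g j) ∘ₗ ff j = 0 := by
    intro j
    ext x
    show g (Pi.single j (ff j x)) = ((0 : comp R j Q) : Q)
    rw [← piMapLin_single ff j x]
    exact LinearMap.congr_fun hgf (Pi.single j x)
  have hstep : ∀ j, ∃ h : PP j →ₗ[R j] comp R j Q, h ∘ₗ ff j = piComponent g j :=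
    fun j => hffl j (ModuleCat.of (R j) (comp R j Q))
      (haveI := hQ; comp_projective R j Q) (piComponent g j) (hg₀ j)
  choose h₀ hh₀ using hstep
  refine ⟨piAssemble h₀, ?_⟩
  have hfinal : piAssemble h₀ ∘ₗ piMapLin ff = piAssemble (fun j => piComponent g j) := by
    ext x
    show (∑ j, ((h₀ j ((piMapLin ff x) j) : comp R j Q) : Q)) = _
    refine Finset.sum_congr rfl fun j _ => ?_
    show ((h₀ j (ff j (x j)) : comp R j Q) : Q) = ((piComponent g j (x j) : comp R j Q) : Q)
    exact congrArg Subtype.val (LinearMap.congr_fun (hh₀ j) (x j))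
  rw [hfinal, piAssemble_piComponent]
/-- Theorem 2.3: for a finite family of rings of finite Gorenstein global dimension, every
Gorenstein projective module over the product is strongly Gorenstein projective iff the same
holds over each factor. -/
theorem prod_gorensteinProjective_eq_strongly_iff
    (m : ℕ) (R : Fin m → Type u) [∀ i, CommRing (R i)]
    (hfin : ∀ i, ∃ n : ℕ, ∀ M : ModuleCat.{v} (R i), GorensteinProjDimLE (R i) n M) :
    (∀ M : ModuleCat.{v} (∀ i, R i),
        IsGorensteinProjective (∀ i, R i) M →
          IsStronglyGorensteinProjective (∀ i, R i) M) ↔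
    (∀ i, ∀ M : ModuleCat.{v} (R i),
        IsGorensteinProjective (R i) M → IsStronglyGorensteinProjective (R i) M) := by
  constructor
  · intro H i M hM
    exact factor_of_prod i H M hM
  · intro H M hM
    exact prod_of_factors H M hM
end

section
/- Let R₁ and R₂ be commutative rings, each with finite Gorenstein global dimension. If N is a strongly Gorenstein projective R₁-module, then N × 0 is a strongly Gorenstein projective module over the product ring R₁ × R₂. -/
universe u v

section AuxProof

variable {R₁ : Type u} {R₂ : Type u} [CommRing R₁] [CommRing R₂]

/-- Transfer projectivity from `R₁` to `R₁ × R₂` when the action factors through `fst`. -/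
theorem aux_projective_prod (P : Type v) [AddCommGroup P] [Module R₁ P]
    [Module (R₁ × R₂) P] (hcomp : ∀ (r : R₁ × R₂) (x : P), r • x = r.1 • x)
    (hP : Module.Projective R₁ P) : Module.Projective (R₁ × R₂) P := by
  obtain ⟨s, hs⟩ := Module.projective_def'.1 hP
  refine Module.projective_def'.2 ⟨⟨⟨fun p => (s p).mapRange (fun a => ((a, 0) : R₁ × R₂)) rfl,
      ?_⟩, ?_⟩, ?_⟩
  · intro p q
    simp only [map_add]
    exact Finsupp.mapRange_add (by intro a b; rw [Prod.mk_add_mk, add_zero]) _ _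
  · intro r p
    dsimp only
    rw [hcomp, map_smul]
    ext q <;>
      simp [Finsupp.mapRange_apply, Finsupp.smul_apply, Prod.fst_mul, Prod.snd_mul]
  · ext p
    have hp := LinearMap.congr_fun hs p
    simp only [LinearMap.comp_apply, LinearMap.id_apply, LinearMap.coe_mk, AddHom.coe_mk] at hp ⊢
    rw [Finsupp.linearCombination_apply, Finsupp.sum_mapRange_index (fun a => by simp)]
    rw [Finsupp.linearCombination_apply] at hp
    calc ((s p).sum fun a b => ((b, 0) : R₁ × R₂) • id a)
        = (s p).sum fun a b => b • id a := by
          refine Finset.sum_congr rfl fun a _ => ?_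
          dsimp only
          rw [hcomp]
    _ = p := hp

/-- The "first component" part of an `R₁ × R₂`-module: elements killed by `(0, 1)`. -/
def ker₂ (Q : Type v) [AddCommGroup Q] [Module (R₁ × R₂) Q] : Submodule (R₁ × R₂) Q where
  carrier := {q | ((0, 1) : R₁ × R₂) • q = 0}
  add_mem' := by
    intro a b ha hb
    simp only [Set.mem_setOf_eq] at *
    rw [smul_add, ha, hb, add_zero]
  zero_mem' := smul_zero _
  smul_mem' := by
    intro c x hx
    simp only [Set.mem_setOf_eq] at *
    rw [smul_comm, hx, smul_zero]

theorem ker₂_smul_eq {Q : Type v} [AddCommGroup Q] [Module (R₁ × R₂) Q] {q : Q}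
    (hq : ((0, 1) : R₁ × R₂) • q = 0) (a : R₁) (b b' : R₂) :
    ((a, b) : R₁ × R₂) • q = ((a, b') : R₁ × R₂) • q := by
  have h1 : (((a, b) : R₁ × R₂) - (a, b')) • q = 0 := by
    have h2 : (((a, b) : R₁ × R₂) - (a, b')) = ((0, b - b') : R₁ × R₂) * (0, 1) := by
      rw [Prod.mk_mul_mk, Prod.mk_sub_mk]
      exact Prod.ext (by simp) (by simp)
    rw [h2, mul_smul, hq, smul_zero]
  rw [sub_smul, sub_eq_zero] at h1
  exact h1

instance ker₂SMul (Q : Type v) [AddCommGroup Q] [Module (R₁ × R₂) Q] :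
    SMul R₁ (ker₂ (R₁ := R₁) (R₂ := R₂) Q) :=
  ⟨fun r q => ⟨((r, 1) : R₁ × R₂) • q.1, by
    have hq := q.2
    simp only [ker₂, Submodule.mem_mk, AddSubmonoid.mem_mk, AddSubsemigroup.mem_mk,
      Set.mem_setOf_eq] at hq ⊢
    rw [smul_comm, hq, smul_zero]⟩⟩

theorem ker₂_mem {Q : Type v} [AddCommGroup Q] [Module (R₁ × R₂) Q] (q : ker₂ (R₁ := R₁) (R₂ := R₂) Q) :
    ((0, 1) : R₁ × R₂) • (q : Q) = 0 := q.2

theorem ker₂_smul_def {Q : Type v} [AddCommGroup Q] [Module (R₁ × R₂) Q] (r : R₁)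
    (q : ker₂ (R₁ := R₁) (R₂ := R₂) Q) : ((r • q : ker₂ (R₁ := R₁) (R₂ := R₂) Q) : Q) = ((r, 1) : R₁ × R₂) • (q : Q) :=
  rfl

instance ker₂Module (Q : Type v) [AddCommGroup Q] [Module (R₁ × R₂) Q] :
    Module R₁ (ker₂ (R₁ := R₁) (R₂ := R₂) Q) where
  one_smul q := Subtype.ext (by rw [ker₂_smul_def]; exact one_smul _ _)
  mul_smul a b q := Subtype.ext (by
    rw [ker₂_smul_def, ker₂_smul_def, ker₂_smul_def, ← mul_smul, Prod.mk_mul_mk, mul_one])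
  smul_zero a := Subtype.ext (by rw [ker₂_smul_def]; exact smul_zero _)
  smul_add a q q' := Subtype.ext (by
    simp only [ker₂_smul_def, Submodule.coe_add]
    exact smul_add _ _ _)
  add_smul a b q := Subtype.ext (by
    simp only [ker₂_smul_def, Submodule.coe_add]
    rw [← add_smul, Prod.mk_add_mk]
    exact ker₂_smul_eq (ker₂_mem q) (a + b) 1 (1 + 1))
  zero_smul q := Subtype.ext (by
    rw [ker₂_smul_def]
    exact ker₂_mem q)

theorem ker₂_projective (Q : Type v) [AddCommGroup Q] [Module (R₁ × R₂) Q]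
    (hQ : Module.Projective (R₁ × R₂) Q) :
    Module.Projective R₁ (ker₂ (R₁ := R₁) (R₂ := R₂) Q) := by
  obtain ⟨s, hs⟩ := Module.projective_def'.1 hQ
  refine Module.Projective.of_split (M := Q →₀ R₁)
    (⟨⟨fun q => (s q.1).mapRange Prod.fst rfl, ?_⟩, ?_⟩)
    (⟨⟨fun x => ⟨Finsupp.linearCombination (R₁ × R₂) id
      (x.mapRange (fun a => ((a, 0) : R₁ × R₂)) rfl), ?_⟩, ?_⟩, ?_⟩) ?_
  · intro q q'
    simp only [Submodule.coe_add, map_add]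
    exact Finsupp.mapRange_add (fun a b => rfl) _ _
  · intro r q
    dsimp only
    rw [ker₂_smul_def, map_smul]
    ext a
    simp only [Finsupp.mapRange_apply, Finsupp.smul_apply, smul_eq_mul, Prod.fst_mul,
      RingHom.id_apply]
  · -- membership of sec x in ker₂
    show ((0, 1) : R₁ × R₂) • (Finsupp.linearCombination (R₁ × R₂) id
      (x.mapRange (fun a => ((a, 0) : R₁ × R₂)) rfl)) = 0
    rw [Finsupp.linearCombination_apply, Finsupp.sum_mapRange_index (fun a => by simp),
      Finsupp.smul_sum]
    refine Finset.sum_eq_zero fun a _ => ?_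
    dsimp only
    rw [← mul_smul, Prod.mk_mul_mk, zero_mul, mul_zero, Prod.mk_zero_zero, zero_smul]
  · intro x y
    rw [← Subtype.coe_inj]
    push_cast
    rw [← map_add]
    congr 1
    exact Finsupp.mapRange_add (by intro a b; rw [Prod.mk_add_mk, add_zero]) _ _
  · intro r x
    rw [← Subtype.coe_inj, ker₂_smul_def]
    dsimp only [RingHom.id_apply]
    rw [← map_smul]
    congr 1
    ext a <;>
      simp [Finsupp.mapRange_apply, Finsupp.smul_apply, Prod.fst_mul, Prod.snd_mul]
  · -- section property
    ext q
    show (Finsupp.linearCombination (R₁ × R₂) id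
      (((s q.1).mapRange Prod.fst rfl).mapRange (fun a => ((a, 0) : R₁ × R₂)) rfl) : Q) = q.1
    rw [Finsupp.linearCombination_apply, Finsupp.sum_mapRange_index (fun a => by simp),
      Finsupp.sum_mapRange_index (fun a => by rw [Prod.mk_zero_zero, zero_smul])]
    have hq := LinearMap.congr_fun hs q.1
    simp only [LinearMap.comp_apply, LinearMap.id_apply] at hq
    rw [Finsupp.linearCombination_apply] at hq
    calc ((s q.1).sum fun a b => ((b.1, 0) : R₁ × R₂) • id a)
        = (s q.1).sum fun a b => ((1, 0) : R₁ × R₂) • (b • id a) := by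
          refine Finset.sum_congr rfl fun a _ => ?_
          dsimp only
          rw [← mul_smul]
          congr 1
          refine Prod.ext ?_ ?_ <;> simp [Prod.fst_mul, Prod.snd_mul]
    _ = ((1, 0) : R₁ × R₂) • ((s q.1).sum fun a b => b • id a) := Finsupp.smul_sum.symm
    _ = ((1, 0) : R₁ × R₂) • q.1 := by rw [hq]
    _ = q.1 := by
          rw [show (((1, 0) : R₁ × R₂)) = 1 - (0, 1) from
              Prod.ext (by simp) (by simp), sub_smul, one_smul, ker₂_mem q, sub_zero]

end AuxProof
/-- If `R₁, R₂` have finite Gorenstein global dimension and `N` is a strongly Gorenstein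
projective `R₁`-module, then `N × 0` is a strongly Gorenstein projective `R₁ × R₂`-module
(where `R₁ × R₂` acts on `N` through the first projection). -/
theorem stronglyGorensteinProjective_prod_of_left
    (R₁ : Type u) (R₂ : Type u) [CommRing R₁] [CommRing R₂]
    (h₁ : ∃ n : ℕ, ∀ M : ModuleCat.{v} R₁, GorensteinProjDimLE R₁ n M)
    (h₂ : ∃ n : ℕ, ∀ M : ModuleCat.{v} R₂, GorensteinProjDimLE R₂ n M)
    (N : Type v) [AddCommGroup N] [Module R₁ N]
    (hN : IsStronglyGorensteinProjective R₁ (ModuleCat.of R₁ N)) :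
    letI : Module (R₁ × R₂) N := Module.compHom N (RingHom.fst R₁ R₂)
    IsStronglyGorensteinProjective (R₁ × R₂) (ModuleCat.of (R₁ × R₂) N) := by
  letI : Module (R₁ × R₂) N := Module.compHom N (RingHom.fst R₁ R₂)
  show IsStronglyGorensteinProjective (R₁ × R₂) (ModuleCat.of (R₁ × R₂) N)
  obtain ⟨P, f, hPproj, hrk, ⟨e⟩, hlift⟩ := hN
  letI : Module (R₁ × R₂) P := Module.compHom P (RingHom.fst R₁ R₂)
  have hcomp : ∀ (r : R₁ × R₂) (x : P), r • x = r.1 • x := fun _ _ => rfl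
  set f' : ModuleCat.of (R₁ × R₂) (↥P) →ₗ[R₁ × R₂] ModuleCat.of (R₁ × R₂) (↥P) :=
    { toFun := f
      map_add' := f.map_add
      map_smul' := fun r x => f.map_smul r.1 x } with hf'
  have hf'app : ∀ x : P, f' x = f x := fun _ => rfl
  refine ⟨ModuleCat.of (R₁ × R₂) (↥P), f', ?_, ?_, ⟨?_⟩, ?_⟩
  · exact aux_projective_prod (↥P) hcomp hPproj
  · refine Submodule.ext fun x => ?_
    have h1 : x ∈ LinearMap.range f ↔ x ∈ LinearMap.ker f := by rw [hrk]
    exact h1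
  · -- the isomorphism N ≃ₗ[R₁ × R₂] range f'
    have hmemiff : ∀ x : P, x ∈ LinearMap.range f' ↔ x ∈ LinearMap.range f := by
      intro x
      exact Iff.rfl
    refine
      { toFun := fun x => ⟨(e x : P), (hmemiff _).2 (e x).2⟩
        invFun := fun y => e.symm ⟨y.1, (hmemiff _).1 y.2⟩
        map_add' := fun x y => Subtype.ext (congrArg Subtype.val (map_add e x y))
        map_smul' := fun r x => Subtype.ext (congrArg Subtype.val (e.map_smul r.1 x))
        left_inv := fun x => ?_
        right_inv := fun y => Subtype.ext ?_ }
    · show e.symm ⟨((e x : ↥(LinearMap.range f)) : P), _⟩ = x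
      have h3 : (⟨((e x : ↥(LinearMap.range f)) : P), (hmemiff _).1 ((hmemiff _).2 (e x).2)⟩ :
          ↥(LinearMap.range f)) = e x := Subtype.ext rfl
      rw [h3, e.symm_apply_apply]
    · show ((e (e.symm ⟨y.1, _⟩) : ↥(LinearMap.range f)) : P) = y.1
      rw [e.apply_symm_apply]
  · -- lifting property
    intro Q hQ g hg
    have hgmem : ∀ p : P, g p ∈ ker₂ (R₁ := R₁) (R₂ := R₂) (↥Q) := by
      intro p
      show ((0, 1) : R₁ × R₂) • g p = 0
      rw [← map_smul]
      have h4 : ((0, 1) : R₁ × R₂) • p = 0 := by rw [hcomp]; exact zero_smul _ _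
      rw [h4, map_zero]
    set g₁ : P →ₗ[R₁] ModuleCat.of R₁ (↥(ker₂ (R₁ := R₁) (R₂ := R₂) (↥Q))) :=
      { toFun := fun p => ⟨g p, hgmem p⟩
        map_add' := fun p q => Subtype.ext (map_add g p q)
        map_smul' := fun r p => Subtype.ext (by
          show g (r • p) = ((r, 1) : R₁ × R₂) • g p
          have h5 : r • p = ((r, 1) : R₁ × R₂) • p := (hcomp ((r, 1) : R₁ × R₂) p).symm
          rw [h5, map_smul]) } with hg₁
    have hg₁f : g₁ ∘ₗ f = 0 := by
      ext p
      show g (f p) = 0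
      exact LinearMap.congr_fun hg p
    obtain ⟨h₁, hh₁⟩ := hlift (ModuleCat.of R₁ (↥(ker₂ (R₁ := R₁) (R₂ := R₂) (↥Q))))
      (ker₂_projective (↥Q) hQ) g₁ hg₁f
    refine ⟨{ toFun := fun p => (h₁ p).1
              map_add' := fun p q => congrArg Subtype.val (map_add h₁ p q)
              map_smul' := fun r p => ?_ }, ?_⟩
    · dsimp only [RingHom.id_apply]
      refine Eq.trans (congrArg Subtype.val (h₁.map_smul r.1 p)) ?_
      refine Eq.trans (ker₂_smul_eq (R₁ := R₁) (R₂ := R₂) (ker₂_mem (h₁ p)) r.1 1 r.2) ?_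
      rw [Prod.mk.eta]
    · ext p
      exact congrArg Subtype.val (LinearMap.congr_fun hh₁ p)
end
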